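/- arXiv:1111.1836 — 5 statements merged into one kernel-verified Lean document; each statement's English description precedes it below -/
import Mathlib

section
/- Let G be a finite simple graph and H a subgraph of G (both with unit weights) such that deleting the edges of H from G yields a graph L on the same vertex set. Let λ₁ ≤ ... ≤ λ_n and θ₁ ≤ ... ≤ θ_n be the eigenvalues of the combinatorial graph Laplacians of G and L respectively. Then for all k, λ_{k − (|V(H)| − c(H))} ≤ θ_k ≤ λ_{k + |V(H)|}, where V(H) is the set of non-isolated vertices of H, c(H) is the number of connected components of H, λ_j := 0 for j ≤ 0, and λ_j := n for j > n. -/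
open Matrix Finset Module SimpleGraph

section auxq
variable {m : Type*} [Fintype m]

lemma sum_dotProduct' {ι : Type*} (s : Finset ι) (f : ι → m → ℝ) (w : m → ℝ) :
    (∑ i ∈ s, f i) ⬝ᵥ w = ∑ i ∈ s, f i ⬝ᵥ w := by
  simp only [dotProduct, Finset.sum_apply, Finset.sum_mul]
  exact Finset.sum_comm

lemma dotProduct_sum' {ι : Type*} (s : Finset ι) (v : m → ℝ) (f : ι → m → ℝ) :
    v ⬝ᵥ (∑ i ∈ s, f i) = ∑ i ∈ s, v ⬝ᵥ f i := by
  simp only [dotProduct, Finset.sum_apply, Finset.mul_sum]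
  exact Finset.sum_comm

lemma eig_orth (A : Matrix m m ℝ) (hA : A.IsSymm) {f g : m → ℝ} {a b : ℝ}
    (hf : A *ᵥ f = a • f) (hg : A *ᵥ g = b • g) (hab : a ≠ b) : f ⬝ᵥ g = 0 := by
  have h1 : f ⬝ᵥ (A *ᵥ g) = b * (f ⬝ᵥ g) := by rw [hg, dotProduct_smul, smul_eq_mul]
  have h2 : f ⬝ᵥ (A *ᵥ g) = a * (f ⬝ᵥ g) := by
    rw [dotProduct_mulVec, ← mulVec_transpose, hA.eq, hf, smul_dotProduct, smul_eq_mul]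
  have h3 : (a - b) * (f ⬝ᵥ g) = 0 := by rw [sub_mul, ← h1, ← h2, sub_self]
  rcases mul_eq_zero.mp h3 with h | h
  · exact absurd (sub_eq_zero.mp h) hab
  · exact h

lemma quad_ge {ι : Type*} [Fintype ι] (A : Matrix m m ℝ) (hA : A.IsSymm)
    (f : ι → m → ℝ) (mu : ι → ℝ) (heig : ∀ i, A *ᵥ f i = mu i • f i)
    (t : ℝ) (ht : ∀ i, t ≤ mu i) (c : ι → ℝ) :
    t * ((∑ i, c i • f i) ⬝ᵥ (∑ i, c i • f i))
      ≤ (∑ i, c i • f i) ⬝ᵥ (A *ᵥ (∑ i, c i • f i)) := by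
  have hAx : A *ᵥ (∑ i, c i • f i) = ∑ i, (c i * mu i) • f i := by
    show A.mulVecLin _ = _
    rw [map_sum]
    refine Finset.sum_congr rfl fun i _ => ?_
    rw [LinearMap.map_smul, mulVecLin_apply, heig i, smul_smul]
  rw [hAx]
  have expand : ∀ (d e : ι → ℝ),
      (∑ i, d i • f i) ⬝ᵥ (∑ j, e j • f j) = ∑ i, ∑ j, (d i * e j) * (f i ⬝ᵥ f j) := by
    intro d e
    rw [sum_dotProduct']
    refine Finset.sum_congr rfl fun i _ => ?_
    rw [dotProduct_sum']
    refine Finset.sum_congr rfl fun j _ => ?_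
    rw [smul_dotProduct, dotProduct_smul, smul_eq_mul, smul_eq_mul]
    ring
  set y : m → ℝ := ∑ i, (c i * Real.sqrt (mu i - t)) • f i with hy
  have key : ∀ i j : ι,
      ((c i * Real.sqrt (mu i - t)) * (c j * Real.sqrt (mu j - t))) * (f i ⬝ᵥ f j)
        = (c i * (c j * mu j)) * (f i ⬝ᵥ f j) - t * ((c i * c j) * (f i ⬝ᵥ f j)) := by
    intro i j
    by_cases hmu : mu i = mu j
    · have hss : Real.sqrt (mu j - t) * Real.sqrt (mu j - t) = mu j - t :=
        Real.mul_self_sqrt (by linarith [ht j])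
      rw [hmu]
      linear_combination (c i * c j * (f i ⬝ᵥ f j)) * hss
    · rw [eig_orth A hA (heig i) (heig j) hmu]
      ring
  have hynn : (0:ℝ) ≤ y ⬝ᵥ y := Finset.sum_nonneg fun i _ => mul_self_nonneg _
  have hyeq : y ⬝ᵥ y = (∑ i, ∑ j, (c i * (c j * mu j)) * (f i ⬝ᵥ f j))
      - t * (∑ i, ∑ j, (c i * c j) * (f i ⬝ᵥ f j)) := by
    rw [hy, expand, Finset.mul_sum, ← Finset.sum_sub_distrib]
    refine Finset.sum_congr rfl fun i _ => ?_
    rw [Finset.mul_sum, ← Finset.sum_sub_distrib]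
    exact Finset.sum_congr rfl fun j _ => key i j
  rw [expand, expand]
  linarith [hynn, hyeq]

lemma quad_le {ι : Type*} [Fintype ι] (A : Matrix m m ℝ) (hA : A.IsSymm)
    (f : ι → m → ℝ) (mu : ι → ℝ) (heig : ∀ i, A *ᵥ f i = mu i • f i)
    (t : ℝ) (ht : ∀ i, mu i ≤ t) (c : ι → ℝ) :
    (∑ i, c i • f i) ⬝ᵥ (A *ᵥ (∑ i, c i • f i))
      ≤ t * ((∑ i, c i • f i) ⬝ᵥ (∑ i, c i • f i)) := by
  have h := quad_ge (-A) (by rw [Matrix.IsSymm, Matrix.transpose_neg, hA.eq])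
    f (fun i => - mu i) (fun i => by rw [Matrix.neg_mulVec, heig i, neg_smul]) (-t)
    (fun i => neg_le_neg (ht i)) c
  have hneg : (∑ i, c i • f i) ⬝ᵥ ((-A) *ᵥ (∑ i, c i • f i))
      = - ((∑ i, c i • f i) ⬝ᵥ (A *ᵥ (∑ i, c i • f i))) := by
    rw [Matrix.neg_mulVec, dotProduct_neg]
  rw [hneg] at h
  linarith

lemma dp_self_pos (x : m → ℝ) (hx : x ≠ 0) : 0 < x ⬝ᵥ x := by
  have h1 : 0 ≤ x ⬝ᵥ x := Finset.sum_nonneg fun i _ => mul_self_nonneg _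
  rcases h1.lt_or_eq with h | h
  · exact h
  · exfalso
    apply hx
    funext i
    have := (Finset.sum_eq_zero_iff_of_nonneg
      (fun i _ => mul_self_nonneg (x i))).mp h.symm i (Finset.mem_univ i)
    exact mul_self_eq_zero.mp this

end auxq

lemma card_le_subtype {n : ℕ} (k : Fin n) :
    Fintype.card {i : Fin n // i ≤ k} = (k : ℕ) + 1 := by
  rw [Fintype.card_eq_nat_card]
  have : {i : Fin n // i ≤ k} ≃ Fin ((k : ℕ) + 1) :=
    { toFun := fun i => ⟨(i : Fin n), by have := i.2; omega⟩
      invFun := fun j => ⟨⟨(j : ℕ), by omega⟩, by have := j.2; simp [Fin.le_def]; omega⟩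
      left_inv := fun i => by ext; rfl
      right_inv := fun j => by ext; rfl }
  rw [Nat.card_congr this]
  simp

lemma card_ge_subtype {n : ℕ} (m : ℕ) (hm : m ≤ n) :
    Fintype.card {i : Fin n // m ≤ (i : ℕ)} = n - m := by
  rw [Fintype.card_eq_nat_card]
  have : {i : Fin n // m ≤ (i : ℕ)} ≃ Fin (n - m) :=
    { toFun := fun i => ⟨(i : ℕ) - m, by have := i.2; have := (i : Fin n).2; omega⟩
      invFun := fun j => ⟨⟨(j : ℕ) + m, by have := j.2; omega⟩, by simp⟩
      left_inv := fun i => by ext; have := i.2; simp; omega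
      right_inv := fun j => by ext; simp }
  rw [Nat.card_congr this]
  simp

lemma exists_ne_zero_mem_inf {M : Type*} [AddCommGroup M] [Module ℝ M]
    [FiniteDimensional ℝ M] (U V : Submodule ℝ M)
    (h : finrank ℝ M < finrank ℝ U + finrank ℝ V) :
    ∃ x : M, x ≠ 0 ∧ x ∈ U ∧ x ∈ V := by
  have h1 := Submodule.finrank_sup_add_finrank_inf_eq U V
  have h2 : finrank ℝ ↥(U ⊔ V) ≤ finrank ℝ M := Submodule.finrank_le _
  have h3 : 0 < finrank ℝ ↥(U ⊓ V) := by omega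
  rw [finrank_pos_iff] at h3
  obtain ⟨⟨x, hx⟩, hx0⟩ := exists_ne (0 : ↥(U ⊓ V))
  refine ⟨x, fun h0 => hx0 (Subtype.ext h0), (Submodule.mem_inf.mp hx).1,
    (Submodule.mem_inf.mp hx).2⟩

lemma lap_add {n : ℕ} (G H L : SimpleGraph (Fin n))
    [DecidableRel G.Adj] [DecidableRel H.Adj] [DecidableRel L.Adj]
    (hHG : H ≤ G) (hL : L = G.deleteEdges H.edgeSet) :
    G.lapMatrix ℝ = L.lapMatrix ℝ + H.lapMatrix ℝ := by
  have hadj : ∀ v w, (if G.Adj v w then (1:ℝ) else 0)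
      = (if L.Adj v w then (1:ℝ) else 0) + (if H.Adj v w then (1:ℝ) else 0) := by
    intro v w
    have hLadj : L.Adj v w ↔ G.Adj v w ∧ ¬ H.Adj v w := by
      rw [hL, deleteEdges_adj, mem_edgeSet]
    by_cases hH : H.Adj v w
    · have hG : G.Adj v w := hHG hH
      simp [hG, hH, hLadj]
    · by_cases hG : G.Adj v w <;> simp [hG, hH, hLadj]
  have hdeg : G.degMatrix ℝ = L.degMatrix ℝ + H.degMatrix ℝ := by
    ext v w
    by_cases hvw : v = w
    · subst hvw
      simp only [degMatrix, Matrix.add_apply, Matrix.diagonal_apply_eq]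
      rw [degree_eq_sum_if_adj, degree_eq_sum_if_adj, degree_eq_sum_if_adj,
        ← Finset.sum_add_distrib]
      exact Finset.sum_congr rfl fun j _ => hadj v j
    · simp [degMatrix, Matrix.diagonal_apply_ne _ hvw]
  have hA : G.adjMatrix ℝ = L.adjMatrix ℝ + H.adjMatrix ℝ := by
    ext v w
    simp only [adjMatrix_apply, Matrix.add_apply]
    exact hadj v w
  simp only [lapMatrix, hdeg, hA]
  abel

lemma walk_resp_adj {α : Type*} (H : SimpleGraph α) {β : Sort*} (f : α → β)
    (h : ∀ v w, H.Adj v w → f v = f w) :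
    ∀ (v w : α), H.Reachable v w → f v = f w := by
  intro v w ⟨p⟩
  induction p with
  | nil => rfl
  | cons ha _ ih => exact (h _ _ ha).trans ih

section comps
variable {n : ℕ} (H : SimpleGraph (Fin n)) [DecidableRel H.Adj]

noncomputable def comp_equiv :
    H.ConnectedComponent ≃
      ((H.induce {v : Fin n | ∃ u, H.Adj v u}).ConnectedComponent ⊕
        ↥({v : Fin n | ∃ u, H.Adj v u}ᶜ)) := by
  classical
  set V : Set (Fin n) := {v : Fin n | ∃ u, H.Adj v u} with hV
  set f : Fin n → ((H.induce V).ConnectedComponent ⊕ ↥(Vᶜ)) := fun v =>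
    if hv : v ∈ V then Sum.inl ((H.induce V).connectedComponentMk ⟨v, hv⟩)
    else Sum.inr ⟨v, hv⟩ with hf
  have hresp : ∀ v w, H.Adj v w → f v = f w := by
    intro v w hvw
    have hv : v ∈ V := ⟨w, hvw⟩
    have hw : w ∈ V := ⟨v, hvw.symm⟩
    rw [hf]
    simp only [dif_pos hv, dif_pos hw]
    congr 1
    exact ConnectedComponent.sound (Adj.reachable (by simpa using hvw))
  have hresp2 : ∀ (v w : ↥V), (H.induce V).Adj v w →
      H.connectedComponentMk v.1 = H.connectedComponentMk w.1 := by
    intro v w hvw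
    exact ConnectedComponent.sound (Adj.reachable (by simpa using hvw))
  refine
    { toFun := ConnectedComponent.lift f (fun v w p _ => walk_resp_adj H f hresp v w ⟨p⟩)
      invFun := Sum.elim
        (ConnectedComponent.lift (fun vv => H.connectedComponentMk vv.1)
          (fun v w p _ => walk_resp_adj (H.induce V)
              (fun vv => H.connectedComponentMk vv.1) hresp2 v w ⟨p⟩))
        (fun vv => H.connectedComponentMk vv.1)
      left_inv := ?_
      right_inv := ?_ }
  · refine ConnectedComponent.ind fun v => ?_
    by_cases hv : v ∈ V <;> simp [hf, hv]
  · rintro (c | vv)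
    · refine ConnectedComponent.ind (fun vv => ?_) c
      simp [hf, vv.2]
    · simp only [Sum.elim_inr, ConnectedComponent.lift_mk]
      rw [hf]
      simp only
      rw [dif_neg (by exact vv.2)]

lemma cmk_surj {α : Type*} (G : SimpleGraph α) :
    Function.Surjective G.connectedComponentMk :=
  fun c => ConnectedComponent.ind (fun v => ⟨v, rfl⟩) c

instance : Finite ((H.induce {v : Fin n | ∃ u, H.Adj v u}).ConnectedComponent) :=
  Finite.of_surjective _ (cmk_surj _)

lemma comp_count :
    Fintype.card H.ConnectedComponent + ({v : Fin n | ∃ u, H.Adj v u}).ncard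
      = Nat.card ((H.induce {v : Fin n | ∃ u, H.Adj v u}).ConnectedComponent) + n := by
  classical
  have h1 : Nat.card H.ConnectedComponent
      = Nat.card ((H.induce {v : Fin n | ∃ u, H.Adj v u}).ConnectedComponent)
        + Nat.card ↥({v : Fin n | ∃ u, H.Adj v u}ᶜ) := by
    rw [Nat.card_congr (comp_equiv H), Nat.card_sum]
  have h2 := Set.ncard_add_ncard_compl ({v : Fin n | ∃ u, H.Adj v u})
  have h3 : (Set.univ : Set (Fin n)).ncard = n := by
    rw [Set.ncard_univ]; simp
  rw [Fintype.card_eq_nat_card, h1, ← Nat.card_coe_set_eq,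
    Nat.card_coe_set_eq, Nat.card_coe_set_eq]
  simp only [Nat.card_eq_fintype_card, Fintype.card_fin] at h2
  omega

lemma comp_le_card :
    Nat.card ((H.induce {v : Fin n | ∃ u, H.Adj v u}).ConnectedComponent)
      ≤ ({v : Fin n | ∃ u, H.Adj v u}).ncard := by
  rw [← Nat.card_coe_set_eq]
  exact Nat.card_le_card_of_surjective _ (cmk_surj _)

lemma ncard_le_n : ({v : Fin n | ∃ u, H.Adj v u}).ncard ≤ n := by
  rw [← Nat.card_coe_set_eq]
  calc Nat.card ↥{v : Fin n | ∃ u, H.Adj v u} ≤ Nat.card (Fin n) :=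
        Nat.card_le_card_of_injective _ Subtype.val_injective
    _ = n := by simp

end comps

lemma sum_sq_expand {n : ℕ} (x : Fin n → ℝ) :
    ∑ i : Fin n, ∑ j : Fin n, (x i - x j)^2
      = (n:ℝ) * (∑ i, x i^2) + (n:ℝ) * (∑ i, x i^2) - 2 * (∑ i, x i)^2 := by
  have e1 : ∀ i : Fin n, ∑ j : Fin n, (x i - x j)^2
      = (n:ℝ) * x i^2 - 2 * x i * (∑ j, x j) + ∑ j, x j^2 := by
    intro i
    simp_rw [sub_sq]
    rw [Finset.sum_add_distrib, Finset.sum_sub_distrib, Finset.sum_const, card_univ,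
      Fintype.card_fin, ← Finset.mul_sum, nsmul_eq_mul]
  simp_rw [e1]
  rw [Finset.sum_add_distrib, Finset.sum_sub_distrib, ← Finset.sum_mul, ← Finset.mul_sum,
    Finset.sum_const, card_univ, Fintype.card_fin, nsmul_eq_mul,
    show (∑ i : Fin n, 2 * x i) = 2 * ∑ j : Fin n, x j from (Finset.mul_sum _ _ _).symm]
  ring

lemma lap_quad_le_n {n : ℕ} (L : SimpleGraph (Fin n)) [DecidableRel L.Adj] (x : Fin n → ℝ) :
    x ⬝ᵥ (L.lapMatrix ℝ *ᵥ x) ≤ (n : ℝ) * (x ⬝ᵥ x) := by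
  have h0 : x ⬝ᵥ (L.lapMatrix ℝ *ᵥ x)
      = (∑ i, ∑ j, if L.Adj i j then (x i - x j)^2 else 0) / 2 := by
    rw [← toLinearMap₂'_apply', lapMatrix_toLinearMap₂']
  have h1 : (∑ i, ∑ j, if L.Adj i j then (x i - x j)^2 else 0)
      ≤ ∑ i : Fin n, ∑ j : Fin n, (x i - x j)^2 := by
    refine Finset.sum_le_sum fun i _ => Finset.sum_le_sum fun j _ => ?_
    split_ifs
    · exact le_refl _
    · positivity
  have h2 : x ⬝ᵥ x = ∑ i, x i ^ 2 := by
    simp [dotProduct, pow_two]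
  have h3 := sum_sq_expand x
  have h4 : (0:ℝ) ≤ (∑ i, x i)^2 := sq_nonneg _
  rw [h0, h2]
  linarith

/-- nonnegativity of the Laplacian quadratic form -/
lemma lap_quad_nonneg {n : ℕ} (L : SimpleGraph (Fin n)) [DecidableRel L.Adj] (x : Fin n → ℝ) :
    0 ≤ x ⬝ᵥ (L.lapMatrix ℝ *ᵥ x) := by
  have := (posSemidef_lapMatrix ℝ L).dotProduct_mulVec_nonneg x
  simpa using this

set_option maxHeartbeats 1000000 in
lemma interlace_up {n : ℕ} (A B : Matrix (Fin n) (Fin n) ℝ)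
    (hA : A.IsSymm) (hB : B.IsSymm)
    (hle : ∀ x, x ⬝ᵥ (B *ᵥ x) ≤ x ⬝ᵥ (A *ᵥ x))
    (lam theta : Fin n → ℝ) (hlam : Monotone lam) (htheta : Monotone theta)
    (flam : Fin n → Fin n → ℝ) (hfli : LinearIndependent ℝ flam)
    (hfleig : ∀ i, A *ᵥ flam i = lam i • flam i)
    (fth : Fin n → Fin n → ℝ) (hfti : LinearIndependent ℝ fth)
    (hfteig : ∀ i, B *ᵥ fth i = theta i • fth i)
    (k : Fin n) : theta k ≤ lam k := by
  have hfrTop : finrank ℝ (Fin n → ℝ) = n := by simp [finrank_pi]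
  have hfrSthHi : finrank ℝ (Submodule.span ℝ
      (Set.range (fun i : {i : Fin n // (k : ℕ) ≤ (i : ℕ)} => fth i.1))) = n - (k : ℕ) := by
    have h : LinearIndependent ℝ (fun i : {i : Fin n // (k : ℕ) ≤ (i : ℕ)} => fth i.1) :=
      hfti.comp Subtype.val Subtype.val_injective
    rw [finrank_span_eq_card h, card_ge_subtype _ (le_of_lt k.2)]
  have hfrSlamLo : finrank ℝ (Submodule.span ℝ
      (Set.range (fun i : {i : Fin n // i ≤ k} => flam i.1))) = (k : ℕ) + 1 := by
    have h : LinearIndependent ℝ (fun i : {i : Fin n // i ≤ k} => flam i.1) :=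
      hfli.comp Subtype.val Subtype.val_injective
    rw [finrank_span_eq_card h, card_le_subtype]
  obtain ⟨x, hx0, hxU, hxV⟩ := exists_ne_zero_mem_inf
    (Submodule.span ℝ (Set.range (fun i : {i : Fin n // (k : ℕ) ≤ (i : ℕ)} => fth i.1)))
    (Submodule.span ℝ (Set.range (fun i : {i : Fin n // i ≤ k} => flam i.1)))
    (by rw [hfrTop, hfrSthHi, hfrSlamLo]; have := k.2; omega)
  obtain ⟨c, hc⟩ := (Submodule.mem_span_range_iff_exists_fun ℝ).mp hxU
  obtain ⟨d, hd⟩ := (Submodule.mem_span_range_iff_exists_fun ℝ).mp hxV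
  have q1 : theta k * (x ⬝ᵥ x) ≤ x ⬝ᵥ (B *ᵥ x) := by
    rw [← hc]
    exact quad_ge B hB (fun i : {i : Fin n // (k : ℕ) ≤ (i : ℕ)} => fth i.1)
      (fun i => theta i.1) (fun i => hfteig i.1) (theta k)
      (fun i => htheta (by rw [Fin.le_def]; exact i.2)) c
  have q2 : x ⬝ᵥ (A *ᵥ x) ≤ lam k * (x ⬝ᵥ x) := by
    rw [← hd]
    exact quad_le A hA (fun i : {i : Fin n // i ≤ k} => flam i.1)
      (fun i => lam i.1) (fun i => hfleig i.1) (lam k)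
      (fun i => hlam i.2) d
  exact le_of_mul_le_mul_right (by linarith [hle x]) (dp_self_pos x hx0)

set_option maxHeartbeats 1000000 in
lemma interlace_low {n : ℕ} (A B C : Matrix (Fin n) (Fin n) ℝ)
    (hA : A.IsSymm) (hB : B.IsSymm) (hsum : A = B + C)
    (lam theta : Fin n → ℝ) (hlam : Monotone lam) (htheta : Monotone theta)
    (flam : Fin n → Fin n → ℝ) (hfli : LinearIndependent ℝ flam)
    (hfleig : ∀ i, A *ᵥ flam i = lam i • flam i)
    (fth : Fin n → Fin n → ℝ) (hfti : LinearIndependent ℝ fth)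
    (hfteig : ∀ i, B *ᵥ fth i = theta i • fth i)
    (r : ℕ) (hker : n ≤ finrank ℝ (LinearMap.ker (Matrix.toLin' C)) + r)
    (k : Fin n) (m : ℕ) (hmn : m < n) (hmk : m + r ≤ (k : ℕ)) :
    lam ⟨m, hmn⟩ ≤ theta k := by
  have hfrTop : finrank ℝ (Fin n → ℝ) = n := by simp [finrank_pi]
  have hfrSthLo : finrank ℝ (Submodule.span ℝ
      (Set.range (fun i : {i : Fin n // i ≤ k} => fth i.1))) = (k : ℕ) + 1 := by
    have h : LinearIndependent ℝ (fun i : {i : Fin n // i ≤ k} => fth i.1) :=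
      hfti.comp Subtype.val Subtype.val_injective
    rw [finrank_span_eq_card h, card_le_subtype]
  have hfrSlamHi : finrank ℝ (Submodule.span ℝ
      (Set.range (fun i : {i : Fin n // m ≤ (i : ℕ)} => flam i.1))) = n - m := by
    have h : LinearIndependent ℝ (fun i : {i : Fin n // m ≤ (i : ℕ)} => flam i.1) :=
      hfli.comp Subtype.val Subtype.val_injective
    rw [finrank_span_eq_card h, card_ge_subtype _ (le_of_lt hmn)]
  have hfrInf : (k : ℕ) + 1 + finrank ℝ (LinearMap.ker (Matrix.toLin' C))
      ≤ finrank ℝ ↥((Submodule.span ℝ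
          (Set.range (fun i : {i : Fin n // i ≤ k} => fth i.1)))
        ⊓ (LinearMap.ker (Matrix.toLin' C))) + n := by
    have h1 := Submodule.finrank_sup_add_finrank_inf_eq
      (Submodule.span ℝ (Set.range (fun i : {i : Fin n // i ≤ k} => fth i.1)))
      (LinearMap.ker (Matrix.toLin' C))
    have h2 : finrank ℝ ↥((Submodule.span ℝ
        (Set.range (fun i : {i : Fin n // i ≤ k} => fth i.1)))
        ⊔ (LinearMap.ker (Matrix.toLin' C))) ≤ n :=
      le_trans (Submodule.finrank_le _) (le_of_eq hfrTop)
    omega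
  obtain ⟨x, hx0, hxUK, hxV⟩ := exists_ne_zero_mem_inf
    ((Submodule.span ℝ (Set.range (fun i : {i : Fin n // i ≤ k} => fth i.1)))
      ⊓ (LinearMap.ker (Matrix.toLin' C)))
    (Submodule.span ℝ (Set.range (fun i : {i : Fin n // m ≤ (i : ℕ)} => flam i.1)))
    (by rw [hfrTop, hfrSlamHi]; have := k.2; omega)
  obtain ⟨hxU, hxK⟩ := Submodule.mem_inf.mp hxUK
  obtain ⟨c, hc⟩ := (Submodule.mem_span_range_iff_exists_fun ℝ).mp hxU
  obtain ⟨d, hd⟩ := (Submodule.mem_span_range_iff_exists_fun ℝ).mp hxV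
  have hCx : C *ᵥ x = 0 := by
    rw [LinearMap.mem_ker] at hxK
    rw [← Matrix.toLin'_apply, hxK]
  have q1 : lam ⟨m, hmn⟩ * (x ⬝ᵥ x) ≤ x ⬝ᵥ (A *ᵥ x) := by
    rw [← hd]
    exact quad_ge A hA (fun i : {i : Fin n // m ≤ (i : ℕ)} => flam i.1)
      (fun i => lam i.1) (fun i => hfleig i.1) (lam ⟨m, hmn⟩)
      (fun i => hlam (by rw [Fin.le_def]; exact i.2)) d
  have q2 : x ⬝ᵥ (B *ᵥ x) ≤ theta k * (x ⬝ᵥ x) := by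
    rw [← hc]
    exact quad_le B hB (fun i : {i : Fin n // i ≤ k} => fth i.1)
      (fun i => theta i.1) (fun i => hfteig i.1) (theta k)
      (fun i => htheta i.2) c
  have q3 : x ⬝ᵥ (A *ᵥ x) = x ⬝ᵥ (B *ᵥ x) := by
    rw [hsum, Matrix.add_mulVec, dotProduct_add, hCx, dotProduct_zero, add_zero]
  exact le_of_mul_le_mul_right (by linarith) (dp_self_pos x hx0)

def extSeq {N : ℕ} (lam : Fin N → ℝ) (lo hi : ℝ) (j : ℤ) : ℝ :=
  if h : 1 ≤ j ∧ j ≤ (N : ℤ) then lam ⟨(j - 1).toNat, by omega⟩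
  else if j ≤ 0 then lo else hi

set_option maxHeartbeats 1000000 in
/-- **Interlacing for the combinatorial graph Laplacian under deletion of a subgraph.**
Let `G` be a finite simple graph on `n` vertices, `H ≤ G` a subgraph, and `L` the graph
obtained by deleting the edges of `H` from `G`. If `λ₁ ≤ … ≤ λ_n` and `θ₁ ≤ … ≤ θ_n` are
the eigenvalues of the combinatorial Laplacians of `G` and `L` (each realized by a
linearly independent eigenbasis), then
`λ_{k − (|V(H)| − c(H))} ≤ θ_k ≤ λ_{k + |V(H)|}`, where `V(H)` is the set of
non-isolated vertices of `H`, `c(H)` the number of connected components of the graph `H`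
induced on `V(H)`, `λ_j := 0` for `j ≤ 0` and `λ_j := n` for `j > n`. -/
theorem stmt_6 {n : ℕ} (G H L : SimpleGraph (Fin n))
    [DecidableRel G.Adj] [DecidableRel H.Adj] [DecidableRel L.Adj]
    (hHG : H ≤ G) (hL : L = G.deleteEdges H.edgeSet)
    (lam theta : Fin n → ℝ)
    (hlam : Monotone lam) (htheta : Monotone theta)
    (flam : Fin n → Fin n → ℝ) (hfli : LinearIndependent ℝ flam)
    (hfleig : ∀ i, (G.lapMatrix ℝ).mulVec (flam i) = lam i • flam i)
    (fth : Fin n → Fin n → ℝ) (hfti : LinearIndependent ℝ fth)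
    (hfteig : ∀ i, (L.lapMatrix ℝ).mulVec (fth i) = theta i • fth i)
    (k : Fin n) :
    extSeq lam 0 n (((k : ℕ) : ℤ) + 1
        - (({v : Fin n | ∃ u, H.Adj v u}.ncard : ℤ)
          - (Nat.card (H.induce {v : Fin n | ∃ u, H.Adj v u}).ConnectedComponent : ℤ)))
      ≤ theta k ∧
    theta k ≤ extSeq lam 0 n (((k : ℕ) : ℤ) + 1 + ({v : Fin n | ∃ u, H.Adj v u}.ncard : ℤ)) := by
  classical
  have hcc := comp_count H
  have hcle := comp_le_card H
  have hWn := ncard_le_n H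
  set W : ℕ := ({v : Fin n | ∃ u, H.Adj v u}).ncard with hW
  set cInd : ℕ := Nat.card ((H.induce {v : Fin n | ∃ u, H.Adj v u}).ConnectedComponent)
    with hcInd
  have hkn : (k : ℕ) < n := k.2
  have hlap : G.lapMatrix ℝ = L.lapMatrix ℝ + H.lapMatrix ℝ := lap_add G H L hHG hL
  have key1 : theta k ≤ lam k := by
    refine interlace_up (G.lapMatrix ℝ) (L.lapMatrix ℝ) (isSymm_lapMatrix ℝ G)
      (isSymm_lapMatrix ℝ L) (fun x => ?_) lam theta hlam htheta
      flam hfli hfleig fth hfti hfteig k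
    rw [hlap, Matrix.add_mulVec, dotProduct_add]
    have := lap_quad_nonneg H x
    linarith
  have heigk : fth k ⬝ᵥ (L.lapMatrix ℝ *ᵥ fth k) = theta k * (fth k ⬝ᵥ fth k) := by
    rw [hfteig k, dotProduct_smul, smul_eq_mul]
  have hfthkpos : 0 < fth k ⬝ᵥ fth k := dp_self_pos _ (hfti.ne_zero k)
  have hth0 : 0 ≤ theta k := by
    have h5 := lap_quad_nonneg L (fth k)
    rw [heigk] at h5
    nlinarith
  have hthn : theta k ≤ (n : ℝ) := by
    have h5 := lap_quad_le_n L (fth k)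
    rw [heigk] at h5
    nlinarith
  constructor
  · by_cases hcase : 1 ≤ ((k : ℕ) : ℤ) + 1 - ((W : ℤ) - (cInd : ℤ))
    · have hmn : (k : ℕ) - (W - cInd) < n := by omega
      have hfin : lam ⟨(k : ℕ) - (W - cInd), hmn⟩ ≤ theta k := by
        refine interlace_low (G.lapMatrix ℝ) (L.lapMatrix ℝ) (H.lapMatrix ℝ)
          (isSymm_lapMatrix ℝ G) (isSymm_lapMatrix ℝ L) hlap lam theta hlam htheta
          flam hfli hfleig fth hfti hfteig (W - cInd) ?_ k _ hmn (by omega)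
        rw [← card_connectedComponent_eq_finrank_ker_toLin'_lapMatrix H]
        omega
      have hidx : (1 ≤ ((k : ℕ) : ℤ) + 1 - ((W : ℤ) - (cInd : ℤ))
          ∧ ((k : ℕ) : ℤ) + 1 - ((W : ℤ) - (cInd : ℤ)) ≤ (n : ℤ)) := by omega
      rw [extSeq, dif_pos hidx]
      have heq : (⟨((((k : ℕ) : ℤ) + 1 - ((W : ℤ) - (cInd : ℤ))) - 1).toNat, by omega⟩ : Fin n)
          = ⟨(k : ℕ) - (W - cInd), hmn⟩ := by
        ext
        simp only
        omega
      rw [heq]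
      exact hfin
    · rw [extSeq, dif_neg (by omega), if_pos (by omega)]
      exact hth0
  · by_cases hcase : ((k : ℕ) : ℤ) + 1 + (W : ℤ) ≤ (n : ℤ)
    · have hidx : (1 ≤ ((k : ℕ) : ℤ) + 1 + (W : ℤ)
          ∧ ((k : ℕ) : ℤ) + 1 + (W : ℤ) ≤ (n : ℤ)) := ⟨by omega, hcase⟩
      rw [extSeq, dif_pos hidx]
      refine key1.trans (hlam ?_)
      rw [Fin.le_def]
      simp only
      omega
    · rw [extSeq, dif_neg (by omega), if_neg (by omega)]
      exact hthn
end

section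
/- Let K be a finite simplicial complex with unit weights on all simplices and L a subcomplex of K with S_n(L) = S_n(K) (same n-skeleton in dimension n). Then the eigenvalues of the combinatorial up-Laplacians satisfy θ_k ≤ λ_k for all k, where θ₁ ≤ ... ≤ θ_N and λ₁ ≤ ... ≤ λ_N are the eigenvalues of L^{up}_n(L) and L^{up}_n(K) respectively. -/
/-- A finite abstract simplicial complex on vertex set `Fin m`:
a collection of nonempty finite vertex sets closed under taking nonempty subsets. -/
def IsComplex {m : ℕ} (K : Finset (Finset (Fin m))) : Prop :=
  (∀ s ∈ K, s.Nonempty) ∧ ∀ s ∈ K, ∀ t, t ⊆ s → t.Nonempty → t ∈ K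

/-- The `n`-dimensional faces (simplices with `n+1` vertices) of `K`. -/
def faces {m : ℕ} (K : Finset (Finset (Fin m))) (n : ℕ) : Finset (Finset (Fin m)) :=
  K.filter fun s => s.card = n + 1

/-- The incidence sign `(-1)^i` where `i` is the position of vertex `v` in the
canonically (increasingly) ordered vertex list of the simplex `s`. -/
def incSign {m : ℕ} (s : Finset (Fin m)) (v : Fin m) : ℝ :=
  (-1 : ℝ) ^ ((s.sort (· ≤ ·)).idxOf v)

/-- Simplicial coboundary with respect to canonical orientations:
`(δ f)([v₀,…,v_{n+1}]) = Σᵢ (-1)ⁱ f([v₀,…,v̂ᵢ,…,v_{n+1}])`. -/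
def coboundary {m : ℕ} (f : Finset (Fin m) → ℝ) (s : Finset (Fin m)) : ℝ :=
  ∑ v ∈ s, incSign s v * f (s.erase v)

/-- The weighted up-Laplacian `L^{up}_n = δ_n^* δ_n` on `n`-cochains, where the formal
adjoint `δ_n^*` is taken with respect to the weighted inner products
`(f,g) = Σ_F w(F) f(F) g(F)` and is extended by zero on simplices of weight zero. -/
noncomputable def upLap {m : ℕ} (K : Finset (Finset (Fin m))) (w : Finset (Fin m) → ℝ) (n : ℕ)
    (f : Finset (Fin m) → ℝ) (F : Finset (Fin m)) : ℝ :=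
  if w F = 0 then 0 else
    (w F)⁻¹ * ∑ s ∈ (faces K (n + 1)).filter (fun s => F ⊆ s),
      w s * (∑ v ∈ s \ F, incSign s v) * coboundary f s

/-- `lam : Fin N → ℝ` is the non-decreasing enumeration (with multiplicity) of the
eigenvalues of the weighted up-Laplacian `L^{up}_n(K, w)` acting on `C^n(K, ℝ)`:
there is a linearly independent eigenbasis realizing these eigenvalues. -/
def eigenseq {m : ℕ} (K : Finset (Finset (Fin m))) (w : Finset (Fin m) → ℝ) (n : ℕ)
    {N : ℕ} (lam : Fin N → ℝ) : Prop :=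
  Monotone lam ∧ N = (faces K n).card ∧
    ∃ f : Fin N → (Finset (Fin m) → ℝ),
      LinearIndependent ℝ f ∧
      (∀ i F, F ∉ faces K n → f i F = 0) ∧
      (∀ i F, F ∈ faces K n → upLap K w n (f i) F = lam i * f i F)

open scoped RealInnerProductSpace

section Abstract

variable {E : Type*} [NormedAddCommGroup E] [InnerProductSpace ℝ E] [FiniteDimensional ℝ E]

lemma aux_rayleigh_le {ι : Type*} [Fintype ι] {T : E →ₗ[ℝ] E} (hT : T.IsSymmetric)
    {e : ι → E} (he : LinearIndependent ℝ e) {μ : ι → ℝ}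
    (heig : ∀ i, T (e i) = μ i • e i) {c : ℝ} (hμ : ∀ i, μ i ≤ c)
    {x : E} (hx : x ∈ Submodule.span ℝ (Set.range e)) :
    ⟪T x, x⟫ ≤ c * ⟪x, x⟫ := by
  classical
  set V := Submodule.span ℝ (Set.range e) with hVdef
  have hV : ∀ y ∈ V, T y ∈ V := by
    intro y hy
    induction hy using Submodule.span_induction with
    | mem z hz =>
      obtain ⟨i, rfl⟩ := hz
      rw [heig]
      exact V.smul_mem _ (Submodule.subset_span ⟨i, rfl⟩)
    | zero => simp
    | add u v hu hv h1 h2 => rw [map_add]; exact V.add_mem h1 h2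
    | smul a u hu h1 => rw [map_smul]; exact V.smul_mem a h1
  set T' : V →ₗ[ℝ] V := T.restrict hV with hT'def
  have hT' : T'.IsSymmetric := by
    intro u v
    have := hT u.1 v.1
    simpa [hT'def, Submodule.coe_inner, LinearMap.restrict_coe_apply] using this
  have hd : Module.finrank ℝ V = Module.finrank ℝ V := rfl
  set b := hT'.eigenvectorBasis hd with hbdef
  set ν := hT'.eigenvalues hd with hνdef
  -- eigenvalue bound
  have hνc : ∀ j, ν j ≤ c := by
    intro j
    set B : Module.Basis ι ℝ V := Module.Basis.span he with hBdef
    have hBcoe : ∀ i, (B i : E) = e i := fun i => congrArg Subtype.val (Module.Basis.span_apply he i)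
    have hT'B : ∀ i, T' (B i) = μ i • B i := by
      intro i
      apply Subtype.ext
      rw [LinearMap.restrict_coe_apply]
      push_cast [Submodule.coe_smul]
      rw [hBcoe, heig]
    set y : V := b j with hydef
    have hy0 : y ≠ 0 := b.orthonormal.ne_zero j
    have hTy : T' y = ν j • y := by
      have h := hT'.apply_eigenvectorBasis hd j
      exact_mod_cast h
    set a : ι → ℝ := fun i => B.repr y i with hadef
    have hyexp : y = ∑ i, a i • B i := (B.sum_repr y).symm
    have hTyexp : T' y = ∑ i, (μ i * a i) • B i := by
      rw [hyexp, map_sum]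
      apply Finset.sum_congr rfl
      intro i _
      rw [map_smul, hT'B, smul_smul, mul_comm]
    have hcoeff : ∀ i, μ i * a i = ν j * a i := by
      intro i
      have h1 : B.repr (T' y) = fun i => μ i * a i := by
        rw [hTyexp]; exact B.repr_sum_self _
      have h2 : B.repr (T' y) i = ν j * a i := by
        rw [hTy, map_smul]; simp [hadef]
      calc μ i * a i = B.repr (T' y) i := by rw [h1]
        _ = ν j * a i := h2
    obtain ⟨i, hi⟩ : ∃ i, a i ≠ 0 := by
      by_contra hcon
      push_neg at hcon
      apply hy0
      rw [hyexp]
      simp [hcon]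
    have : μ i = ν j := mul_right_cancel₀ hi (hcoeff i)
    rw [← this]; exact hμ i
  -- Rayleigh computation
  set y : V := ⟨x, hx⟩ with hydef
  have hips : ∀ u v : V, ⟪u, v⟫ = ∑ j, b.repr u j * b.repr v j := by
    intro u v
    rw [← b.repr.inner_map_map u v]
    simp only [PiLp.inner_apply, RCLike.inner_apply, starRingEnd_apply, star_trivial]
    exact Finset.sum_congr rfl fun _ _ => mul_comm _ _
  have hcoe1 : ⟪T x, x⟫ = ⟪T' y, y⟫ := by
    simp [hT'def, Submodule.coe_inner, LinearMap.restrict_coe_apply, hydef]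
  have hcoe2 : ⟪x, x⟫ = ⟪y, y⟫ := by
    simp [Submodule.coe_inner, hydef]
  rw [hcoe1, hcoe2, hips, hips]
  have hrep : ∀ j, b.repr (T' y) j = ν j * b.repr y j := fun j =>
    hT'.eigenvectorBasis_apply_self_apply hd y j
  calc ∑ j, b.repr (T' y) j * b.repr y j
      = ∑ j, ν j * (b.repr y j * b.repr y j) := by
        apply Finset.sum_congr rfl; intro j _; rw [hrep]; ring
    _ ≤ ∑ j, c * (b.repr y j * b.repr y j) := by
        apply Finset.sum_le_sum
        intro j _
        exact mul_le_mul_of_nonneg_right (hνc j) (mul_self_nonneg _)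
    _ = c * ∑ j, b.repr y j * b.repr y j := by rw [Finset.mul_sum]

lemma aux_rayleigh_ge {ι : Type*} [Fintype ι] {T : E →ₗ[ℝ] E} (hT : T.IsSymmetric)
    {e : ι → E} (he : LinearIndependent ℝ e) {μ : ι → ℝ}
    (heig : ∀ i, T (e i) = μ i • e i) {c : ℝ} (hμ : ∀ i, c ≤ μ i)
    {x : E} (hx : x ∈ Submodule.span ℝ (Set.range e)) :
    c * ⟪x, x⟫ ≤ ⟪T x, x⟫ := by
  have hTneg : (-T).IsSymmetric := by
    intro u v
    simp only [LinearMap.neg_apply, inner_neg_left, inner_neg_right]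
    rw [hT u v]
  have heig' : ∀ i, (-T) (e i) = (-μ i) • e i := by
    intro i; simp [heig, neg_smul]
  have hμ' : ∀ i, -μ i ≤ -c := fun i => neg_le_neg (hμ i)
  have := aux_rayleigh_le hTneg he heig' hμ' hx
  simp only [LinearMap.neg_apply, inner_neg_left] at this
  linarith

end Abstract

lemma courant_weyl {E : Type*} [NormedAddCommGroup E] [InnerProductSpace ℝ E]
    [FiniteDimensional ℝ E] {N : ℕ} (hdim : Module.finrank ℝ E = N)
    {T₁ T₂ : E →ₗ[ℝ] E} (h₁ : T₁.IsSymmetric) (h₂ : T₂.IsSymmetric)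
    (hle : ∀ x, ⟪T₁ x, x⟫ ≤ ⟪T₂ x, x⟫)
    {lam theta : Fin N → ℝ} (hlam : Monotone lam) (htheta : Monotone theta)
    {g f : Fin N → E} (hg : LinearIndependent ℝ g) (hf : LinearIndependent ℝ f)
    (hge : ∀ i, T₂ (g i) = lam i • g i) (hfe : ∀ i, T₁ (f i) = theta i • f i)
    (k : Fin N) : theta k ≤ lam k := by
  classical
  set e₁ : {i : Fin N // k ≤ i} → E := fun j => f j.1 with he₁def
  set e₂ : {i : Fin N // i ≤ k} → E := fun j => g j.1 with he₂def
  have he₁ : LinearIndependent ℝ e₁ := hf.comp _ Subtype.val_injective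
  have he₂ : LinearIndependent ℝ e₂ := hg.comp _ Subtype.val_injective
  set V := Submodule.span ℝ (Set.range e₁) with hVdef
  set W := Submodule.span ℝ (Set.range e₂) with hWdef
  have hdV : Module.finrank ℝ V = N - k := by
    rw [hVdef, finrank_span_eq_card he₁, Fintype.card_subtype]
    rw [show Finset.univ.filter (fun i => k ≤ i) = Finset.Ici k by ext i; simp]
    exact Fin.card_Ici k
  have hdW : Module.finrank ℝ W = k + 1 := by
    rw [hWdef, finrank_span_eq_card he₂, Fintype.card_subtype]
    rw [show Finset.univ.filter (fun i => i ≤ k) = Finset.Iic k by ext i; simp]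
    exact Fin.card_Iic k
  have hpos : 0 < Module.finrank ℝ ↥(V ⊓ W) := by
    have h1 := Submodule.finrank_sup_add_finrank_inf_eq V W
    have h2 : Module.finrank ℝ ↥(V ⊔ W) ≤ N := hdim ▸ Submodule.finrank_le _
    have hk : (k : ℕ) < N := k.isLt
    omega
  haveI : Nontrivial ↥(V ⊓ W) := Module.nontrivial_of_finrank_pos hpos
  obtain ⟨⟨x, hxVW⟩, hx0⟩ := exists_ne (0 : ↥(V ⊓ W))
  have hx0' : x ≠ 0 := fun h => hx0 (Subtype.ext h)
  have hxV : x ∈ V := hxVW.1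
  have hxW : x ∈ W := hxVW.2
  have h1 : theta k * ⟪x, x⟫ ≤ ⟪T₁ x, x⟫ :=
    aux_rayleigh_ge h₁ he₁ (fun j => hfe j.1) (fun j => htheta j.2) hxV
  have h2 : ⟪T₂ x, x⟫ ≤ lam k * ⟪x, x⟫ :=
    aux_rayleigh_le h₂ he₂ (fun j => hge j.1) (fun j => hlam j.2) hxW
  have hxx : (0 : ℝ) < ⟪x, x⟫ := by
    rw [real_inner_self_eq_norm_sq]
    have : ‖x‖ ≠ 0 := norm_ne_zero_iff.mpr hx0'
    positivity
  have := (hle x)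
  exact le_of_mul_le_mul_right (by linarith) hxx


lemma coboundary_add {m : ℕ} (f g : Finset (Fin m) → ℝ) (s : Finset (Fin m)) :
    coboundary (f + g) s = coboundary f s + coboundary g s := by
  simp [coboundary, mul_add, Finset.sum_add_distrib]

lemma coboundary_smul {m : ℕ} (c : ℝ) (f : Finset (Fin m) → ℝ) (s : Finset (Fin m)) :
    coboundary (c • f) s = c * coboundary f s := by
  simp [coboundary, Finset.mul_sum]; apply Finset.sum_congr rfl; intros; ring

noncomputable def extMap {m : ℕ} (𝔉 : Finset (Finset (Fin m))) :
    EuclideanSpace ℝ {s // s ∈ 𝔉} →ₗ[ℝ] (Finset (Fin m) → ℝ) where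
  toFun g s := if h : s ∈ 𝔉 then g ⟨s, h⟩ else 0
  map_add' g h := by funext s; by_cases h' : s ∈ 𝔉 <;> simp [h']
  map_smul' c g := by funext s; by_cases h' : s ∈ 𝔉 <;> simp [h']

noncomputable def lapOp {m : ℕ} (n : ℕ) (K' 𝔉 : Finset (Finset (Fin m))) :
    EuclideanSpace ℝ {s // s ∈ 𝔉} →ₗ[ℝ] EuclideanSpace ℝ {s // s ∈ 𝔉} where
  toFun g := WithLp.toLp 2 (fun F : {s // s ∈ 𝔉} => ∑ s ∈ (faces K' (n + 1)).filter (fun s => F.1 ⊆ s),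
      (∑ v ∈ s \ F.1, incSign s v) * coboundary (extMap 𝔉 g) s)
  map_add' g h := by
    ext F
    simp only [map_add, coboundary_add, PiLp.add_apply, mul_add, Finset.sum_add_distrib]
  map_smul' c g := by
    ext F
    simp only [map_smul, coboundary_smul, PiLp.smul_apply, RingHom.id_apply, smul_eq_mul,
      Finset.mul_sum]
    apply Finset.sum_congr rfl; intros; ring

lemma lapOp_apply {m : ℕ} (n : ℕ) (K' 𝔉 : Finset (Finset (Fin m)))
    (g : EuclideanSpace ℝ {s // s ∈ 𝔉}) (F : {s // s ∈ 𝔉}) :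
    lapOp n K' 𝔉 g F = upLap K' (fun _ => 1) n (extMap 𝔉 g) F.1 := by
  simp [lapOp, upLap]

lemma lap_inner {m : ℕ} (n : ℕ) (K' 𝔉 : Finset (Finset (Fin m)))
    (hKn : ∀ s ∈ faces K' (n + 1), ∀ v ∈ s, s.erase v ∈ 𝔉)
    (hcard : ∀ F ∈ 𝔉, F.card = n + 1)
    (g h : EuclideanSpace ℝ {s // s ∈ 𝔉}) :
    ⟪lapOp n K' 𝔉 g, h⟫ = ∑ s ∈ faces K' (n + 1),
      coboundary (extMap 𝔉 g) s * coboundary (extMap 𝔉 h) s := by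
  classical
  have hip : ⟪lapOp n K' 𝔉 g, h⟫ = ∑ F : {s // s ∈ 𝔉}, lapOp n K' 𝔉 g F * h F := by
    simp only [PiLp.inner_apply, RCLike.inner_apply, starRingEnd_apply, star_trivial]
    exact Finset.sum_congr rfl fun _ _ => mul_comm _ _
  rw [hip]
  have hsub : ∑ F : {s // s ∈ 𝔉}, lapOp n K' 𝔉 g F * h F
      = ∑ F ∈ 𝔉, (∑ s ∈ (faces K' (n + 1)).filter (fun s => F ⊆ s),
          (∑ v ∈ s \ F, incSign s v) * coboundary (extMap 𝔉 g) s) * extMap 𝔉 h F := by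
    rw [← Finset.sum_coe_sort 𝔉]
    apply Finset.sum_congr rfl
    intro F _
    congr 1 <;> simp [extMap, lapOp]
  rw [hsub]
  have step : ∀ s ∈ faces K' (n + 1),
      ∑ F ∈ 𝔉.filter (fun F => F ⊆ s), (∑ v ∈ s \ F, incSign s v) * extMap 𝔉 h F
        = coboundary (extMap 𝔉 h) s := by
    intro s hs
    have hscard : s.card = n + 2 := (Finset.mem_filter.mp hs).2
    have himg : 𝔉.filter (fun F => F ⊆ s) = s.image (fun v => s.erase v) := by
      ext F
      simp only [Finset.mem_filter, Finset.mem_image]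
      constructor
      · rintro ⟨hF𝔉, hFs⟩
        have hcF : F.card = n + 1 := hcard F hF𝔉
        have hss : F ⊂ s := Finset.ssubset_iff_subset_ne.mpr ⟨hFs, by
          intro hEq; rw [hEq] at hcF; omega⟩
        obtain ⟨v, hvs, hvF⟩ := Finset.exists_of_ssubset hss
        refine ⟨v, hvs, ?_⟩
        have hsub2 : F ⊆ s.erase v := Finset.subset_erase.mpr ⟨hFs, hvF⟩
        have hc2 : (s.erase v).card = n + 1 := by
          rw [Finset.card_erase_of_mem hvs, hscard]
          omega
        exact (Finset.eq_of_subset_of_card_le hsub2 (by omega)).symm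
      · rintro ⟨v, hvs, rfl⟩
        exact ⟨hKn s hs v hvs, Finset.erase_subset _ _⟩
    rw [himg, Finset.sum_image]
    · unfold coboundary
      apply Finset.sum_congr rfl
      intro v hvs
      have hsd : s \ s.erase v = {v} := by
        ext x
        simp only [Finset.mem_sdiff, Finset.mem_erase, Finset.mem_singleton, not_and]
        constructor
        · rintro ⟨hxs, hx⟩
          by_contra hne
          exact (hx hne) hxs
        · rintro rfl
          exact ⟨hvs, fun hne => absurd rfl hne⟩
      rw [hsd, Finset.sum_singleton]
    · intro u hu v hv hEq
      by_contra hne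
      have : u ∈ s.erase v := Finset.mem_erase.mpr ⟨hne, hu⟩
      rw [show s.erase v = s.erase u from hEq.symm] at this
      exact (Finset.mem_erase.mp this).1 rfl
  calc ∑ F ∈ 𝔉, (∑ s ∈ (faces K' (n + 1)).filter (fun s => F ⊆ s),
          (∑ v ∈ s \ F, incSign s v) * coboundary (extMap 𝔉 g) s) * extMap 𝔉 h F
      = ∑ F ∈ 𝔉, ∑ s ∈ faces K' (n + 1), if F ⊆ s then
          coboundary (extMap 𝔉 g) s * ((∑ v ∈ s \ F, incSign s v) * extMap 𝔉 h F) else 0 := by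
        apply Finset.sum_congr rfl
        intro F _
        rw [Finset.sum_mul, Finset.sum_filter]
        apply Finset.sum_congr rfl
        intro s _
        split <;> ring
    _ = ∑ s ∈ faces K' (n + 1), coboundary (extMap 𝔉 g) s *
          ∑ F ∈ 𝔉.filter (fun F => F ⊆ s), (∑ v ∈ s \ F, incSign s v) * extMap 𝔉 h F := by
        rw [Finset.sum_comm]
        apply Finset.sum_congr rfl
        intro s _
        rw [Finset.mul_sum, Finset.sum_filter]
    _ = ∑ s ∈ faces K' (n + 1), coboundary (extMap 𝔉 g) s * coboundary (extMap 𝔉 h) s := by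
        apply Finset.sum_congr rfl
        intro s hs
        rw [step s hs]

/-- **Courant–Weyl inequality (Corollary 2.17).** If `K` is a finite complex with unit
weights and `L ⊆ K` is a subcomplex with the same `n`-simplices as `K`, then the
eigenvalues of the combinatorial up-Laplacians satisfy `θ_k ≤ λ_k` for all `k`. -/
theorem stmt_9 {m n N : ℕ} (K L : Finset (Finset (Fin m)))
    (hK : IsComplex K) (hL : IsComplex L) (hLK : L ⊆ K)
    (hskel : faces L n = faces K n)
    (lam theta : Fin N → ℝ)
    (hlam : eigenseq K (fun _ => 1) n lam)
    (htheta : eigenseq L (fun _ => 1) n theta) :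
    ∀ k, theta k ≤ lam k := by
  classical
  intro k
  obtain ⟨hlmono, hNK, fK, hfKind, hfKsupp, hfKeig⟩ := hlam
  obtain ⟨htmono, hNL, fL, hfLind, hfLsupp, hfLeig⟩ := htheta
  set 𝔉 : Finset (Finset (Fin m)) := faces K n with h𝔉
  have hcard𝔉 : ∀ F ∈ 𝔉, F.card = n + 1 := fun F hF => (Finset.mem_filter.mp hF).2
  have hKn : ∀ s ∈ faces K (n + 1), ∀ v ∈ s, s.erase v ∈ 𝔉 := by
    intro s hs v hv
    obtain ⟨hsK, hsc⟩ := Finset.mem_filter.mp hs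
    have hec : (s.erase v).card = n + 1 := by
      rw [Finset.card_erase_of_mem hv, hsc]
      omega
    refine Finset.mem_filter.mpr ⟨?_, hec⟩
    exact hK.2 s hsK _ (Finset.erase_subset _ _) (Finset.card_pos.mp (by omega))
  have hLn : ∀ s ∈ faces L (n + 1), ∀ v ∈ s, s.erase v ∈ 𝔉 := by
    intro s hs v hv
    obtain ⟨hsL, hsc⟩ := Finset.mem_filter.mp hs
    have hec : (s.erase v).card = n + 1 := by
      rw [Finset.card_erase_of_mem hv, hsc]
      omega
    rw [← hskel]
    refine Finset.mem_filter.mpr ⟨?_, hec⟩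
    exact hL.2 s hsL _ (Finset.erase_subset _ _) (Finset.card_pos.mp (by omega))
  have hsymK : (lapOp n K 𝔉).IsSymmetric := by
    intro g h
    rw [← real_inner_comm g ((lapOp n K 𝔉) h), lap_inner n K 𝔉 hKn hcard𝔉,
      lap_inner n K 𝔉 hKn hcard𝔉]
    exact Finset.sum_congr rfl fun s _ => mul_comm _ _
  have hsymL : (lapOp n L 𝔉).IsSymmetric := by
    intro g h
    rw [← real_inner_comm g ((lapOp n L 𝔉) h), lap_inner n L 𝔉 hLn hcard𝔉,
      lap_inner n L 𝔉 hLn hcard𝔉]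
    exact Finset.sum_congr rfl fun s _ => mul_comm _ _
  have hle : ∀ x : EuclideanSpace ℝ {s // s ∈ 𝔉},
      ⟪(lapOp n L 𝔉) x, x⟫ ≤ ⟪(lapOp n K 𝔉) x, x⟫ := by
    intro x
    rw [lap_inner n L 𝔉 hLn hcard𝔉, lap_inner n K 𝔉 hKn hcard𝔉]
    apply Finset.sum_le_sum_of_subset_of_nonneg
    · exact Finset.filter_subset_filter _ hLK
    · intro s _ _
      exact mul_self_nonneg _
  have hdim : Module.finrank ℝ (EuclideanSpace ℝ {s // s ∈ 𝔉}) = N := by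
    rw [finrank_euclideanSpace, Fintype.card_coe, ← hNK]
  -- transfer the K-eigenbasis
  set gK : Fin N → EuclideanSpace ℝ {s // s ∈ 𝔉} := fun i => WithLp.toLp 2 (fun F : {s // s ∈ 𝔉} => fK i F.1) with hgKdef
  have hgKext : ∀ i, extMap 𝔉 (gK i) = fK i := by
    intro i
    funext s
    by_cases hs : s ∈ 𝔉
    · simp [extMap, hs, hgKdef]
    · simp only [extMap, LinearMap.coe_mk, AddHom.coe_mk, dif_neg hs]
      exact (hfKsupp i s hs).symm
  have hgKind : LinearIndependent ℝ gK :=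
    LinearIndependent.of_comp (extMap 𝔉)
      (by rw [show (⇑(extMap 𝔉) ∘ gK) = fK from funext hgKext]; exact hfKind)
  have hgKeig : ∀ i, (lapOp n K 𝔉) (gK i) = lam i • gK i := by
    intro i
    ext F
    rw [lapOp_apply n K 𝔉 (gK i) F, hgKext i, hfKeig i F.1 F.2]
    simp [hgKdef]
  -- transfer the L-eigenbasis
  set gL : Fin N → EuclideanSpace ℝ {s // s ∈ 𝔉} := fun i => WithLp.toLp 2 (fun F : {s // s ∈ 𝔉} => fL i F.1) with hgLdef
  have hgLext : ∀ i, extMap 𝔉 (gL i) = fL i := by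
    intro i
    funext s
    by_cases hs : s ∈ 𝔉
    · simp [extMap, hs, hgLdef]
    · simp only [extMap, LinearMap.coe_mk, AddHom.coe_mk, dif_neg hs]
      refine (hfLsupp i s ?_).symm
      rw [hskel]; exact hs
  have hgLind : LinearIndependent ℝ gL :=
    LinearIndependent.of_comp (extMap 𝔉)
      (by rw [show (⇑(extMap 𝔉) ∘ gL) = fL from funext hgLext]; exact hfLind)
  have hgLeig : ∀ i, (lapOp n L 𝔉) (gL i) = theta i • gL i := by
    intro i
    ext F
    rw [lapOp_apply n L 𝔉 (gL i) F, hgLext i, hfLeig i F.1 (by rw [hskel]; exact F.2)]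
    simp [hgLdef]
  exact courant_weyl hdim hsymL hsymK hle hlmono htmono hgKind hgLind hgKeig hgLeig k
end

section
/- Let (L, w_L) be a weighted simplicial complex on N vertices with positive weights, and let θ_max be the largest eigenvalue of the weighted up-Laplacian L^{up}_n(L, w_L) where all weights are at most 1. Then θ_max ≤ N / min{ w_L(F) : F ∈ S_n(L) }. In particular, if w_L ≡ 1 (the combinatorial Laplacian), θ_max ≤ N. -/
open Finset in
lemma list_indexOf_sorted {m : ℕ} (l : List (Fin m)) (hs : l.Pairwise (· ≤ ·)) (hn : l.Nodup)
    (v : Fin m) (hv : v ∈ l) :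
    l.idxOf v = (l.filter (fun u => decide (u < v))).length := by
  induction l with
  | nil => simp at hv
  | cons a l ih =>
    rw [List.pairwise_cons] at hs
    rw [List.nodup_cons] at hn
    rcases eq_or_ne v a with rfl | hne
    · have h1 : ∀ u ∈ l, ¬ (u < v) := by
        intro u hu hlt
        exact absurd (le_antisymm hlt.le (hs.1 u hu)) hlt.ne
      simp only [List.idxOf_cons_self]
      rw [List.filter_cons, if_neg (by simp), List.filter_eq_nil_iff.2 (by simpa using h1)]
      rfl
    · have hvl : v ∈ l := by rcases List.mem_cons.1 hv with h | h; exact absurd h hne; exact h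
      have hav : a < v := lt_of_le_of_ne (hs.1 v hvl) (by rintro rfl; exact hn.1 hvl)
      rw [List.idxOf_cons_ne _ (by simpa using (Ne.symm hne)), List.filter_cons,
        if_pos (by simpa using hav), ih hs.2 hn.2 hvl]
      simp

open Finset in
lemma incSign_eq {m : ℕ} (s : Finset (Fin m)) (v : Fin m) (hv : v ∈ s) :
    incSign s v = (-1 : ℝ) ^ ((s.filter (· < v)).card) := by
  unfold incSign
  rw [list_indexOf_sorted _ (s.pairwise_sort _) (s.sort_nodup _) v (by simpa using hv)]
  congr 1
  have h1 : ((s.sort (· ≤ ·)).filter (fun u => decide (u < v)) : Multiset (Fin m)) =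
      Multiset.filter (· < v) (s.sort (· ≤ ·) : Multiset (Fin m)) := by
    rw [Multiset.filter_coe]
  have h2 : ((s.sort (· ≤ ·)) : Multiset (Fin m)) = s.val := s.sort_eq _
  calc ((s.sort (· ≤ ·)).filter (fun u => decide (u < v))).length
      = Multiset.card ((s.sort (· ≤ ·)).filter (fun u => decide (u < v)) : Multiset (Fin m)) :=
        (Multiset.coe_card _).symm
    _ = Multiset.card (Multiset.filter (· < v) s.val) := by rw [h1, h2]
    _ = (s.filter (· < v)).card := rfl

open Finset in
lemma neg_one_pow_pred (c : ℕ) : ((-1 : ℝ)) ^ c = -((-1 : ℝ) ^ (c + 1)) := by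
  rw [pow_succ]; ring

open Finset in
lemma incSign_erase_mul {m : ℕ} (s : Finset (Fin m)) (u v : Fin m) (hu : u ∈ s) (hv : v ∈ s)
    (hne : u ≠ v) :
    incSign (s.erase v) u * incSign (s.erase u) v = -(incSign s u * incSign s v) := by
  have hu' : u ∈ s.erase v := Finset.mem_erase.2 ⟨hne, hu⟩
  have hv' : v ∈ s.erase u := Finset.mem_erase.2 ⟨hne.symm, hv⟩
  rw [incSign_eq _ _ hu', incSign_eq _ _ hv', incSign_eq _ _ hu, incSign_eq _ _ hv,
    Finset.filter_erase, Finset.filter_erase]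
  rcases hne.lt_or_gt with hlt | hlt
  · have h1 : v ∉ s.filter (· < u) := by simp [hlt.asymm]
    have h2 : u ∈ s.filter (· < v) := by simp [hu, hlt]
    rw [Finset.erase_eq_of_notMem h1, Finset.card_erase_of_mem h2]
    have hpos : 1 ≤ (s.filter (· < v)).card := Finset.card_pos.2 ⟨u, h2⟩ 
    obtain ⟨c, hc⟩ : ∃ c, (s.filter (· < v)).card = c + 1 := ⟨(s.filter (· < v)).card - 1, by omega⟩
    rw [hc]
    simp only [Nat.add_sub_cancel, pow_succ]
    ring
  · have h1 : u ∉ s.filter (· < v) := by simp [hlt.asymm]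
    have h2 : v ∈ s.filter (· < u) := by simp [hv, hlt]
    rw [Finset.erase_eq_of_notMem h1, Finset.card_erase_of_mem h2]
    have hpos : 1 ≤ (s.filter (· < u)).card := Finset.card_pos.2 ⟨v, h2⟩ 
    obtain ⟨c, hc⟩ : ∃ c, (s.filter (· < u)).card = c + 1 := ⟨(s.filter (· < u)).card - 1, by omega⟩
    rw [hc]
    simp only [Nat.add_sub_cancel, pow_succ]
    ring

open Finset in
lemma sum_erase_reindex {m k : ℕ} (h : Finset (Fin m) → Fin m → ℝ) :
    ∑ s ∈ powersetCard (k+1) (univ : Finset (Fin m)), ∑ u ∈ s, h (s.erase u) u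
      = ∑ F ∈ powersetCard k (univ : Finset (Fin m)), ∑ u ∈ Fᶜ, h F u := by
  rw [Finset.sum_sigma' (powersetCard (k+1) (univ : Finset (Fin m))) (fun s => s)
      (fun s u => h (s.erase u) u),
      Finset.sum_sigma' (powersetCard k (univ : Finset (Fin m))) (fun F => Fᶜ)
      (fun F u => h F u)]
  refine Finset.sum_nbij' (fun p => ⟨p.1.erase p.2, p.2⟩) (fun p => ⟨insert p.2 p.1, p.2⟩)
    ?_ ?_ ?_ ?_ ?_
  · rintro ⟨s, u⟩ hp
    simp only [Finset.mem_sigma, Finset.mem_powersetCard_univ] at hp ⊢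
    simp only [Finset.mem_compl, Finset.mem_erase]
    exact ⟨by rw [Finset.card_erase_of_mem hp.2, hp.1]; omega, by simp⟩
  · rintro ⟨F, u⟩ hp
    simp only [Finset.mem_sigma, Finset.mem_powersetCard_univ, Finset.mem_compl] at hp ⊢
    exact ⟨by rw [Finset.card_insert_of_notMem hp.2, hp.1], Finset.mem_insert_self _ _⟩
  · rintro ⟨s, u⟩ hp
    simp only [Finset.mem_sigma, Finset.mem_powersetCard_univ] at hp
    simp [Finset.insert_erase hp.2]
  · rintro ⟨F, u⟩ hp
    simp only [Finset.mem_sigma, Finset.mem_powersetCard_univ, Finset.mem_compl] at hp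
    simp [Finset.erase_insert hp.2]
  · rintro ⟨s, u⟩ hp
    rfl

open Finset in
lemma triple_swap {m : ℕ} (P : Finset (Finset (Fin m))) (A : Finset (Fin m) → Finset (Fin m))
    (f : Finset (Fin m) → Fin m → Fin m → ℝ) :
    ∑ s ∈ P, ∑ u ∈ A s, ∑ v ∈ (A s).erase u, f s u v
      = ∑ u : Fin m, ∑ v ∈ (univ : Finset (Fin m)).erase u,
          ∑ s ∈ P.filter (fun s => u ∈ A s ∧ v ∈ A s), f s u v := by
  have step : ∀ s ∈ P, ∑ u ∈ A s, ∑ v ∈ (A s).erase u, f s u v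
      = ∑ u : Fin m, ∑ v ∈ (univ : Finset (Fin m)).erase u,
          if u ∈ A s ∧ v ∈ A s then f s u v else 0 := by
    intro s _
    have hAs : ∀ u, (A s).erase u = ((univ : Finset (Fin m)).erase u).filter (· ∈ A s) := by
      intro u; ext v; simp [Finset.mem_erase, and_comm]
    have h1 : ∑ u ∈ A s, ∑ v ∈ (A s).erase u, f s u v
        = ∑ u : Fin m, if u ∈ A s then ∑ v ∈ (A s).erase u, f s u v else 0 := by
      rw [← Finset.sum_filter]
      congr 1
      ext u; simp
    rw [h1]
    refine Finset.sum_congr rfl fun u _ => ?_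
    by_cases hu : u ∈ A s
    · simp only [hu, if_true, true_and]
      rw [hAs u, Finset.sum_filter]
    · simp [hu]
  rw [Finset.sum_congr rfl step, Finset.sum_comm]
  refine Finset.sum_congr rfl fun u _ => ?_
  rw [Finset.sum_comm]
  refine Finset.sum_congr rfl fun v _ => ?_
  rw [Finset.sum_filter]

open Finset in
lemma my_erase_comm {α : Type*} [DecidableEq α] (s : Finset α) (u v : α) :
    (s.erase u).erase v = (s.erase v).erase u := by
  ext x; simp only [Finset.mem_erase]; tauto

open Finset in
lemma cross_cancel {m k : ℕ} (g : Finset (Fin m) → ℝ) :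
    ∑ s ∈ powersetCard (k+2) (univ : Finset (Fin m)), ∑ u ∈ s, ∑ v ∈ s.erase u,
        incSign s u * incSign s v * g (s.erase u) * g (s.erase v)
      = ∑ t ∈ powersetCard k (univ : Finset (Fin m)), ∑ u ∈ tᶜ, ∑ v ∈ tᶜ.erase u,
          -(incSign (insert u t) u * incSign (insert v t) v
            * g (insert u t) * g (insert v t)) := by
  rw [triple_swap _ (fun s => s) _, triple_swap _ (fun t => tᶜ) _]
  refine Finset.sum_congr rfl fun u _ => Finset.sum_congr rfl fun v hv => ?_
  have huv : v ≠ u := (Finset.mem_erase.1 hv).1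
  refine Finset.sum_nbij' (fun s => (s.erase u).erase v) (fun t => insert u (insert v t))
    ?_ ?_ ?_ ?_ ?_
  · intro s hs
    simp only [Finset.mem_filter, Finset.mem_powersetCard_univ, Finset.mem_compl] at hs ⊢
    obtain ⟨hcard, hus, hvs⟩ := hs
    refine ⟨?_, by simp, by simp [huv.symm]⟩
    rw [Finset.card_erase_of_mem (Finset.mem_erase.2 ⟨huv, hvs⟩), Finset.card_erase_of_mem hus,
      hcard]
    omega
  · intro t ht
    simp only [Finset.mem_filter, Finset.mem_powersetCard_univ, Finset.mem_compl] at ht ⊢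
    obtain ⟨hcard, hut, hvt⟩ := ht
    have hunotin : u ∉ insert v t := by simp [huv.symm, hut]
    refine ⟨?_, Finset.mem_insert_self _ _, Finset.mem_insert_of_mem (Finset.mem_insert_self _ _)⟩
    rw [Finset.card_insert_of_notMem hunotin, Finset.card_insert_of_notMem hvt, hcard]
  · intro s hs
    simp only [Finset.mem_filter, Finset.mem_powersetCard_univ] at hs
    obtain ⟨hcard, hus, hvs⟩ := hs
    rw [Finset.insert_erase (Finset.mem_erase.2 ⟨huv, hvs⟩), Finset.insert_erase hus]
  · intro t ht
    simp only [Finset.mem_filter, Finset.mem_powersetCard_univ, Finset.mem_compl] at ht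
    obtain ⟨hcard, hut, hvt⟩ := ht
    have hunotin : u ∉ insert v t := by simp [huv.symm, hut]
    rw [Finset.erase_insert hunotin, Finset.erase_insert hvt]
  · intro s hs
    simp only [Finset.mem_filter, Finset.mem_powersetCard_univ] at hs
    obtain ⟨hcard, hus, hvs⟩ := hs
    have hvinsu : v ∈ s.erase u := Finset.mem_erase.2 ⟨huv, hvs⟩
    have huinsv : u ∈ s.erase v := Finset.mem_erase.2 ⟨huv.symm ∘ Eq.symm ∘ Eq.symm, hus⟩
    have e1 : insert u ((s.erase u).erase v) = s.erase v := by
      rw [my_erase_comm, Finset.insert_erase huinsv]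
    have e2 : insert v ((s.erase u).erase v) = s.erase u := Finset.insert_erase hvinsu
    rw [e1, e2, incSign_erase_mul s u v hus hvs (fun h => huv h.symm)]
    ring

open Finset in
lemma incSign_sq {m : ℕ} (s : Finset (Fin m)) (v : Fin m) : (incSign s v)^2 = 1 := by
  unfold incSign
  rw [← pow_mul]
  exact Even.neg_one_pow ⟨(s.sort (· ≤ ·)).idxOf v, by ring⟩

open Finset in
lemma sq_sum_expand {α : Type*} [DecidableEq α] (s : Finset α) (a : α → ℝ) :
    (∑ u ∈ s, a u)^2 = ∑ u ∈ s, (a u)^2 + ∑ u ∈ s, ∑ v ∈ s.erase u, a u * a v := by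
  rw [sq, Finset.sum_mul_sum, ← Finset.sum_add_distrib]
  refine Finset.sum_congr rfl fun u hu => ?_
  rw [← Finset.add_sum_erase s (fun v => a u * a v) hu, sq]

open Finset in
lemma coboundary_sq_bound {m k : ℕ} (g : Finset (Fin m) → ℝ) (hk : k + 1 ≤ m) :
    ∑ s ∈ powersetCard (k+2) (univ : Finset (Fin m)), (coboundary g s)^2
      ≤ (m : ℝ) * ∑ F ∈ powersetCard (k+1) (univ : Finset (Fin m)), (g F)^2 := by
  set Pup := powersetCard (k+2) (univ : Finset (Fin m))
  set Pmid := powersetCard (k+1) (univ : Finset (Fin m))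
  set Pdn := powersetCard k (univ : Finset (Fin m))
  set B : Finset (Fin m) → ℝ := fun t => ∑ u ∈ tᶜ, incSign (insert u t) u * g (insert u t)
    with hBdef
  have E1 : ∑ s ∈ Pup, (coboundary g s)^2
      = (∑ s ∈ Pup, ∑ u ∈ s, (g (s.erase u))^2)
        + ∑ s ∈ Pup, ∑ u ∈ s, ∑ v ∈ s.erase u,
            incSign s u * incSign s v * g (s.erase u) * g (s.erase v) := by
    rw [← Finset.sum_add_distrib]
    refine Finset.sum_congr rfl fun s _ => ?_
    unfold coboundary
    rw [sq_sum_expand]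
    congr 1
    · refine Finset.sum_congr rfl fun u _ => ?_
      rw [mul_pow, incSign_sq, one_mul]
    · refine Finset.sum_congr rfl fun u _ => Finset.sum_congr rfl fun v _ => by ring
  have E2 : ∑ t ∈ Pdn, (B t)^2
      = (∑ t ∈ Pdn, ∑ u ∈ tᶜ, (g (insert u t))^2)
        + ∑ t ∈ Pdn, ∑ u ∈ tᶜ, ∑ v ∈ tᶜ.erase u,
            incSign (insert u t) u * incSign (insert v t) v
              * g (insert u t) * g (insert v t) := by
    rw [← Finset.sum_add_distrib]
    refine Finset.sum_congr rfl fun t _ => ?_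
    rw [hBdef]
    simp only
    rw [sq_sum_expand]
    congr 1
    · refine Finset.sum_congr rfl fun u _ => ?_
      rw [mul_pow, incSign_sq, one_mul]
    · refine Finset.sum_congr rfl fun u _ => Finset.sum_congr rfl fun v _ => by ring
  have D1 : ∑ s ∈ Pup, ∑ u ∈ s, (g (s.erase u))^2
      = ∑ F ∈ Pmid, (((m - (k+1) : ℕ)) : ℝ) * (g F)^2 := by
    rw [show Pup = powersetCard ((k+1)+1) (univ : Finset (Fin m)) by rfl,
      sum_erase_reindex (fun F _ => (g F)^2)]
    refine Finset.sum_congr rfl fun F hF => ?_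
    rw [Finset.sum_const, Finset.card_compl, Finset.mem_powersetCard_univ.1 hF,
      nsmul_eq_mul, Fintype.card_fin]
  have D2 : ∑ t ∈ Pdn, ∑ u ∈ tᶜ, (g (insert u t))^2
      = ∑ F ∈ Pmid, ((k+1 : ℕ) : ℝ) * (g F)^2 := by
    rw [← sum_erase_reindex (fun F u => (g (insert u F))^2)]
    refine Finset.sum_congr rfl fun s hs => ?_
    rw [Finset.sum_congr rfl (fun u hu => by rw [Finset.insert_erase hu]),
      Finset.sum_const, Finset.mem_powersetCard_univ.1 hs, nsmul_eq_mul]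
  have hC : ∑ s ∈ Pup, ∑ u ∈ s, ∑ v ∈ s.erase u,
        incSign s u * incSign s v * g (s.erase u) * g (s.erase v)
      = ∑ t ∈ Pdn, ∑ u ∈ tᶜ, ∑ v ∈ tᶜ.erase u,
          -(incSign (insert u t) u * incSign (insert v t) v
            * g (insert u t) * g (insert v t)) := cross_cancel g
  have hneg : ∑ t ∈ Pdn, ∑ u ∈ tᶜ, ∑ v ∈ tᶜ.erase u,
        -(incSign (insert u t) u * incSign (insert v t) v
          * g (insert u t) * g (insert v t))
      = -∑ t ∈ Pdn, ∑ u ∈ tᶜ, ∑ v ∈ tᶜ.erase u,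
          incSign (insert u t) u * incSign (insert v t) v
            * g (insert u t) * g (insert v t) := by
    simp [Finset.sum_neg_distrib]
  have hDD : ∑ F ∈ Pmid, (((m - (k+1) : ℕ)) : ℝ) * (g F)^2
        + ∑ F ∈ Pmid, ((k+1 : ℕ) : ℝ) * (g F)^2
      = (m : ℝ) * ∑ F ∈ Pmid, (g F)^2 := by
    rw [Finset.mul_sum, ← Finset.sum_add_distrib]
    refine Finset.sum_congr rfl fun F _ => ?_
    have hcast : (((m - (k+1) : ℕ)) : ℝ) = (m : ℝ) - ((k+1 : ℕ) : ℝ) := by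
      rw [Nat.cast_sub hk]
    rw [hcast]; push_cast; ring
  have hB : 0 ≤ ∑ t ∈ Pdn, (B t)^2 := Finset.sum_nonneg (fun _ _ => sq_nonneg _)
  have key : ∑ s ∈ Pup, (coboundary g s)^2 + ∑ t ∈ Pdn, (B t)^2
      = (m : ℝ) * ∑ F ∈ Pmid, (g F)^2 := by
    rw [E1, E2, hC, hneg, D1, D2]
    linarith [hDD]
  linarith [key, hB]

open Finset in
lemma filter_subset_eq_image {m n : ℕ} {L : Finset (Finset (Fin m))} (hL : IsComplex L)
    {s : Finset (Fin m)} (hs : s ∈ faces L (n+1)) :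
    (faces L n).filter (· ⊆ s) = s.image (fun v => s.erase v) := by
  obtain ⟨hsL, hscard⟩ := Finset.mem_filter.1 hs
  ext F
  simp only [Finset.mem_filter, Finset.mem_image, faces] at *
  constructor
  · rintro ⟨⟨hFL, hFcard⟩, hFs⟩
    have hne : (s \ F).Nonempty := by
      rw [← Finset.card_pos, Finset.card_sdiff_of_subset hFs, hscard, hFcard]
      omega
    obtain ⟨v, hv⟩ := hne
    have hvs : v ∈ s := (Finset.mem_sdiff.1 hv).1
    have hvF : v ∉ F := (Finset.mem_sdiff.1 hv).2
    refine ⟨v, hvs, ?_⟩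
    refine (Finset.eq_of_subset_of_card_le (fun x hx => Finset.mem_erase.2
      ⟨fun h => hvF (by rwa [← h]), hFs hx⟩) ?_).symm
    rw [Finset.card_erase_of_mem hvs, hscard, hFcard]
    omega
  · rintro ⟨v, hvs, rfl⟩
    have hcard : (s.erase v).card = n + 1 := by
      rw [Finset.card_erase_of_mem hvs, hscard]; omega
    refine ⟨⟨hL.2 s hsL _ (Finset.erase_subset _ _) ?_, hcard⟩, Finset.erase_subset _ _⟩
    rw [← Finset.card_pos, hcard]; omega

open Finset in
lemma stepA {m n : ℕ} {L : Finset (Finset (Fin m))} (hL : IsComplex L)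
    (w : Finset (Fin m) → ℝ) (hpos : ∀ s ∈ L, 0 < w s)
    (f : Finset (Fin m) → ℝ) (θ : ℝ)
    (heig : ∀ F ∈ faces L n, upLap L w n f F = θ * f F) :
    θ * ∑ F ∈ faces L n, w F * (f F)^2
      = ∑ s ∈ faces L (n+1), w s * (coboundary f s)^2 := by
  have hwne : ∀ F ∈ faces L n, w F ≠ 0 := fun F hF =>
    (hpos F (Finset.mem_filter.1 hF).1).ne'
  have h1 : θ * ∑ F ∈ faces L n, w F * (f F)^2
      = ∑ F ∈ faces L n, f F * ∑ s ∈ (faces L (n + 1)).filter (fun s => F ⊆ s),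
          w s * (∑ v ∈ s \ F, incSign s v) * coboundary f s := by
    rw [Finset.mul_sum]
    refine Finset.sum_congr rfl fun F hF => ?_
    have := heig F hF
    rw [upLap, if_neg (hwne F hF)] at this
    calc θ * (w F * (f F)^2) = w F * f F * (θ * f F) := by ring
      _ = w F * f F * ((w F)⁻¹ * ∑ s ∈ (faces L (n + 1)).filter (fun s => F ⊆ s),
            w s * (∑ v ∈ s \ F, incSign s v) * coboundary f s) := by rw [← this]
      _ = _ := by
          field_simp [hwne F hF]
  rw [h1]
  have h2 : ∑ F ∈ faces L n, f F * ∑ s ∈ (faces L (n + 1)).filter (fun s => F ⊆ s),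
        w s * (∑ v ∈ s \ F, incSign s v) * coboundary f s
      = ∑ s ∈ faces L (n+1), ∑ F ∈ (faces L n).filter (· ⊆ s),
          f F * (w s * (∑ v ∈ s \ F, incSign s v) * coboundary f s) := by
    simp_rw [Finset.mul_sum, Finset.sum_filter]
    exact Finset.sum_comm
  rw [h2]
  refine Finset.sum_congr rfl fun s hs => ?_
  rw [filter_subset_eq_image hL hs]
  have hinj : ∀ x ∈ s, ∀ y ∈ s, s.erase x = s.erase y → x = y := by
    intro x hx y hy h
    by_contra hne
    have hx' : x ∈ s.erase y := Finset.mem_erase.2 ⟨hne, hx⟩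
    rw [← h] at hx'
    exact (Finset.mem_erase.1 hx').1 rfl
  rw [Finset.sum_image hinj]
  have hδ : ∀ v ∈ s, ∑ v' ∈ s \ s.erase v, incSign s v' = incSign s v := by
    intro v hv
    rw [Finset.sdiff_erase_self hv, Finset.sum_singleton]
  calc ∑ v ∈ s, f (s.erase v) * (w s * (∑ v' ∈ s \ s.erase v, incSign s v') * coboundary f s)
      = ∑ v ∈ s, w s * coboundary f s * (incSign s v * f (s.erase v)) := by
        refine Finset.sum_congr rfl fun v hv => ?_
        rw [hδ v hv]; ring
    _ = w s * coboundary f s * ∑ v ∈ s, incSign s v * f (s.erase v) := by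
        rw [← Finset.mul_sum]
    _ = w s * (coboundary f s)^2 := by rw [show ∑ v ∈ s, incSign s v * f (s.erase v) = coboundary f s from rfl]; ring

open Finset in
/-- **Eigenvalue bound (Corollary 2.18).** Let `(L,w_L)` be a weighted simplicial complex
on `N` vertices with positive weights, all at most `1`. Then every eigenvalue of the
weighted up-Laplacian `L^{up}_n(L, w_L)` is at most `N / min{w_L(F) : F ∈ S_n(L)}`;
in particular if `w_L ≡ 1` every eigenvalue is at most `N`. -/
theorem stmt_10 {N n M : ℕ} (L : Finset (Finset (Fin N)))
    (hL : IsComplex L) (hvert : ∀ v : Fin N, ({v} : Finset (Fin N)) ∈ L)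
    (wL : Finset (Fin N) → ℝ)
    (hpos : ∀ s ∈ L, 0 < wL s) (hle1 : ∀ s ∈ L, wL s ≤ 1)
    (theta : Fin M → ℝ) (htheta : eigenseq L wL n theta) (k : Fin M) :
    theta k ≤ (N : ℝ) / sInf {r : ℝ | ∃ F ∈ faces L n, r = wL F} ∧
    ((∀ s ∈ L, wL s = 1) → theta k ≤ (N : ℝ)) := by
  obtain ⟨hmono, hM, f, hlin, hsupp, heig⟩ := htheta
  set g := f k with hg
  have hgne : g ≠ 0 := hlin.ne_zero k
  have hMpos : 0 < M := lt_of_le_of_lt (Nat.zero_le _) k.2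
  have hfaces_ne : (faces L n).Nonempty := Finset.card_pos.1 (by omega)
  have hnN : n + 1 ≤ N := by
    obtain ⟨F₀, hF₀⟩ := hfaces_ne
    have h1 : F₀.card = n + 1 := (Finset.mem_filter.1 hF₀).2
    have h2 : F₀.card ≤ N := by
      simpa using Finset.card_le_univ F₀
    omega
  have himg_ne : ((faces L n).image wL).Nonempty := hfaces_ne.image _
  have hwset : {r : ℝ | ∃ F ∈ faces L n, r = wL F} = ↑((faces L n).image wL) := by
    ext r; simp [eq_comm]
  set wmin := sInf {r : ℝ | ∃ F ∈ faces L n, r = wL F} with hwmin_def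
  have hwmin_eq : wmin = ((faces L n).image wL).min' himg_ne := by
    rw [hwmin_def, hwset, himg_ne.csInf_eq_min']
  have hwmin_mem : ∃ F₁ ∈ faces L n, wL F₁ = wmin := by
    have := ((faces L n).image wL).min'_mem himg_ne
    rw [← hwmin_eq] at this
    simpa [eq_comm] using Finset.mem_image.1 this
  obtain ⟨F₁, hF₁, hF₁w⟩ := hwmin_mem
  have hwmin_pos : 0 < wmin := hF₁w ▸ hpos F₁ (Finset.mem_filter.1 hF₁).1
  have hwmin_le : ∀ F ∈ faces L n, wmin ≤ wL F := by
    intro F hF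
    rw [hwmin_eq]
    exact Finset.min'_le _ _ (Finset.mem_image_of_mem _ hF)
  set S := ∑ F ∈ faces L n, wL F * (g F)^2 with hSdef
  have hS : 0 < S := by
    obtain ⟨F₂, hF₂⟩ := Function.ne_iff.1 hgne
    have hF₂mem : F₂ ∈ faces L n := by
      by_contra h
      exact hF₂ (hsupp k F₂ h)
    refine Finset.sum_pos' (fun F hF => mul_nonneg (hpos F (Finset.mem_filter.1 hF).1).le
      (sq_nonneg _)) ⟨F₂, hF₂mem, ?_⟩
    exact mul_pos (hpos F₂ (Finset.mem_filter.1 hF₂mem).1)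
      (lt_of_le_of_ne (sq_nonneg _) (Ne.symm (pow_ne_zero 2 hF₂)))
  have hA : theta k * S = ∑ s ∈ faces L (n+1), wL s * (coboundary g s)^2 :=
    stepA hL wL hpos g (theta k) (fun F hF => heig k F hF)
  have hchain : ∑ s ∈ faces L (n+1), wL s * (coboundary g s)^2
      ≤ (N : ℝ) * (wmin⁻¹ * S) := by
    have c1 : ∑ s ∈ faces L (n+1), wL s * (coboundary g s)^2
        ≤ ∑ s ∈ faces L (n+1), (coboundary g s)^2 :=
      Finset.sum_le_sum fun s hs =>
        mul_le_of_le_one_left (sq_nonneg _) (hle1 s (Finset.mem_filter.1 hs).1)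
    have c2 : ∑ s ∈ faces L (n+1), (coboundary g s)^2
        ≤ ∑ s ∈ powersetCard (n+2) (univ : Finset (Fin N)), (coboundary g s)^2 := by
      refine Finset.sum_le_sum_of_subset_of_nonneg ?_ (fun _ _ _ => sq_nonneg _)
      intro s hs
      rw [Finset.mem_powersetCard_univ]
      have := (Finset.mem_filter.1 hs).2
      omega
    have c3 := coboundary_sq_bound (k := n) g hnN
    have c4 : ∑ F ∈ powersetCard (n+1) (univ : Finset (Fin N)), (g F)^2
        = ∑ F ∈ faces L n, (g F)^2 := by
      refine (Finset.sum_subset ?_ ?_).symm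
      · intro F hF
        rw [Finset.mem_powersetCard_univ]
        exact (Finset.mem_filter.1 hF).2
      · intro F _ hF
        have hz : g F = 0 := hsupp k F hF
        rw [hz]
        norm_num
    have c5 : ∑ F ∈ faces L n, (g F)^2 ≤ wmin⁻¹ * S := by
      rw [hSdef, Finset.mul_sum]
      refine Finset.sum_le_sum fun F hF => ?_
      rw [← mul_assoc]
      have h1 : (1 : ℝ) ≤ wmin⁻¹ * wL F := by
        rw [← inv_mul_cancel₀ hwmin_pos.ne']
        exact mul_le_mul_of_nonneg_left (hwmin_le F hF) (inv_nonneg.2 hwmin_pos.le)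
      nlinarith [sq_nonneg (g F)]
    calc ∑ s ∈ faces L (n+1), wL s * (coboundary g s)^2
        ≤ ∑ s ∈ powersetCard (n+2) (univ : Finset (Fin N)), (coboundary g s)^2 :=
          le_trans c1 c2
      _ ≤ (N : ℝ) * ∑ F ∈ powersetCard (n+1) (univ : Finset (Fin N)), (g F)^2 := c3
      _ = (N : ℝ) * ∑ F ∈ faces L n, (g F)^2 := by rw [c4]
      _ ≤ (N : ℝ) * (wmin⁻¹ * S) := mul_le_mul_of_nonneg_left c5 (Nat.cast_nonneg N)
  have hmain : theta k ≤ (N : ℝ) / wmin := by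
    rw [div_eq_mul_inv]
    have h1 : theta k * S ≤ ((N : ℝ) * wmin⁻¹) * S := by
      rw [hA, mul_assoc]
      exact hchain
    exact le_of_mul_le_mul_right h1 hS
  refine ⟨hmain, fun hone => ?_⟩
  have : wmin = 1 := by rw [← hF₁w]; exact hone F₁ (Finset.mem_filter.1 hF₁).1
  rw [this, div_one] at hmain
  exact hmain
end

section
/- Let φ : K → L be a strong covering of finite simplicial complexes: a covering map such that for every (n+1)-simplex Ḡ of L with facet G and every F ∈ φ^{-1}(G), there exists an (n+1)-simplex F̄ of K with F ∈ ∂F̄ and φ(F̄) = Ḡ. Then for every n-simplex F of K with φ(F) = G, the number of (n+1)-simplices of K containing F equals the number of (n+1)-simplices of L containing G. -/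
/-- The orientation sign of the image of the simplex `F` under the vertex map `φ`,
with respect to canonical (increasing) orderings: `0` if the image is degenerate,
otherwise the sign of the permutation sorting the image list. -/
def mapSign {a b : ℕ} (φ : Fin a → Fin b) (F : Finset (Fin a)) : ℝ :=
  let l : List (Fin b) := (F.sort (· ≤ ·)).map φ
  if l.Nodup then
    (-1 : ℝ) ^ (Finset.univ.filter
      (fun p : Fin l.length × Fin l.length => p.1 < p.2 ∧ l.get p.2 < l.get p.1)).card
  else 0

/-- The cochain map induced by a vertex map `φ`:
`(φ g)([v₀,…,v_n]) = g([φ(v₀),…,φ(v_n)])` (zero on degenerate images). -/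
noncomputable def pullback {a b : ℕ} (φ : Fin a → Fin b) (g : Finset (Fin b) → ℝ)
    (F : Finset (Fin a)) : ℝ :=
  mapSign φ F * g (F.image φ)

/-- The formal adjoint `φ^*` of the induced cochain map with respect to the
weighted inner products on `C^n(K, w_K)` and `C^n(L, w_L)`. -/
noncomputable def pushforward {a b : ℕ} (φ : Fin a → Fin b) (K : Finset (Finset (Fin a)))
    (wK : Finset (Fin a) → ℝ) (wL : Finset (Fin b) → ℝ) (n : ℕ)
    (f : Finset (Fin a) → ℝ) (G : Finset (Fin b)) : ℝ :=
  if wL G = 0 then 0 else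
    (wL G)⁻¹ * ∑ F ∈ (faces K n).filter (fun F => F.image φ = G),
      wK F * mapSign φ F * f F

/-- `φ` is a simplicial covering map from `K` to `L`: it is simplicial, and the preimage of
every simplex of `L` is a (nonempty) union of pairwise disjoint simplices of `K`, each of
which is mapped bijectively onto it. -/
def IsCovering {a b : ℕ} (φ : Fin a → Fin b) (K : Finset (Finset (Fin a)))
    (L : Finset (Finset (Fin b))) : Prop :=
  (∀ s ∈ K, s.image φ ∈ L) ∧
  ∀ G ∈ L, (∃ F ∈ K, F.image φ = G) ∧
    (∀ F ∈ K, F.image φ = G → F.card = G.card) ∧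
    ∀ F ∈ K, ∀ F' ∈ K, F.image φ = G → F'.image φ = G → F ≠ F' → Disjoint F F'

/-- The strong covering condition in dimension `n`: for every `(n+1)`-simplex `Gb` of `L`
with facet `G`, and every `F` in the fiber over `G`, there is an `(n+1)`-simplex `Fb` of
`K` containing `F` with `φ(Fb) = Gb`. -/
def StrongAt {a b : ℕ} (φ : Fin a → Fin b) (K : Finset (Finset (Fin a)))
    (L : Finset (Finset (Fin b))) (n : ℕ) : Prop :=
  ∀ Gb ∈ faces L (n + 1), ∀ G ∈ faces L n, G ⊆ Gb →
    ∀ F ∈ faces K n, F.image φ = G →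
      ∃ Fb ∈ faces K (n + 1), F ⊆ Fb ∧ Fb.image φ = Gb

/-- `L` is `(n+1)`-path connected: any two `(n+1)`-simplices are joined by a chain of
`(n+1)`-simplices in which consecutive ones are `n`-down neighbours (share an `n`-face). -/
def UpConn {b : ℕ} (L : Finset (Finset (Fin b))) (n : ℕ) : Prop :=
  ∀ s ∈ faces L (n + 1), ∀ t ∈ faces L (n + 1),
    Relation.ReflTransGen (fun x y => y ∈ faces L (n + 1) ∧ (x ∩ y).card = n + 1) s t

/-- `μ` is an eigenvalue of the weighted up-Laplacian `L^{up}_n(K, w)`. -/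
def IsUpEig {m : ℕ} (K : Finset (Finset (Fin m))) (w : Finset (Fin m) → ℝ) (n : ℕ)
    (μ : ℝ) : Prop :=
  ∃ g : Finset (Fin m) → ℝ, g ≠ 0 ∧ (∀ F, F ∉ faces K n → g F = 0) ∧
    ∀ F ∈ faces K n, upLap K w n g F = μ * g F

/-- The normalizing weight function: weight `1` on `(n+1)`-simplices and the degree
(number of `(n+1)`-cofaces) on lower simplices. -/
def normWeight {m : ℕ} (K : Finset (Finset (Fin m))) (n : ℕ) (F : Finset (Fin m)) : ℝ :=
  if F.card = n + 2 then 1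
  else (((faces K (n + 1)).filter fun s => F ⊆ s).card : ℝ)

/-- **Lemma 3.9.** If `φ : K → L` is a strong covering (in dimension `n`), then for every
`n`-simplex `F` of `K` with `φ(F) = G`, the number of `(n+1)`-simplices of `K` containing
`F` equals the number of `(n+1)`-simplices of `L` containing `G`. -/
theorem stmt_14 {a b n : ℕ} (K : Finset (Finset (Fin a))) (L : Finset (Finset (Fin b)))
    (hK : IsComplex K) (hL : IsComplex L)
    (φ : Fin a → Fin b) (hcov : IsCovering φ K L) (hstrong : StrongAt φ K L n)
    (F : Finset (Fin a)) (hF : F ∈ faces K n) :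
    ((faces K (n + 1)).filter fun Fb => F ⊆ Fb).card
      = ((faces L (n + 1)).filter fun Gb => F.image φ ⊆ Gb).card := by
  classical
  obtain ⟨hFK, hFcard⟩ : F ∈ K ∧ F.card = n + 1 := by
    simpa [faces, Finset.mem_filter] using hF
  have hFne : F.Nonempty := hK.1 F hFK
  have hGL : F.image φ ∈ L := hcov.1 F hFK
  have hGcard : (F.image φ).card = n + 1 := by
    have := (hcov.2 (F.image φ) hGL).2.1 F hFK rfl
    omega
  have hGfaces : F.image φ ∈ faces L n := by
    simp [faces, Finset.mem_filter, hGL, hGcard]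
  apply Finset.card_bij (fun Fb _ => Fb.image φ)
  · intro Fb hFb
    rw [Finset.mem_filter] at hFb ⊢
    obtain ⟨hFb1, hFb2⟩ := hFb
    rw [faces, Finset.mem_filter] at hFb1
    obtain ⟨hFbK, hFbcard⟩ := hFb1
    have hImL : Fb.image φ ∈ L := hcov.1 Fb hFbK
    have hImcard : (Fb.image φ).card = n + 2 := by
      have := (hcov.2 (Fb.image φ) hImL).2.1 Fb hFbK rfl
      omega
    refine ⟨by simp [faces, Finset.mem_filter, hImL, hImcard], Finset.image_subset_image hFb2⟩
  · intro Fb hFb Fb' hFb' heq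
    rw [Finset.mem_filter] at hFb hFb'
    obtain ⟨hFb1, hFb2⟩ := hFb
    obtain ⟨hFb'1, hFb'2⟩ := hFb'
    rw [faces, Finset.mem_filter] at hFb1 hFb'1
    by_contra hne
    have hImL : Fb.image φ ∈ L := hcov.1 Fb hFb1.1
    have hdisj := (hcov.2 (Fb.image φ) hImL).2.2 Fb hFb1.1 Fb' hFb'1.1 rfl heq.symm hne
    obtain ⟨v, hv⟩ := hFne
    exact (Finset.disjoint_left.mp hdisj (hFb2 hv)) (hFb'2 hv)
  · intro Gb hGb
    rw [Finset.mem_filter] at hGb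
    obtain ⟨hGb1, hGb2⟩ := hGb
    obtain ⟨Fb, hFbfaces, hFsub, hFbim⟩ :=
      hstrong Gb hGb1 (F.image φ) hGfaces hGb2 F hF rfl
    exact ⟨Fb, Finset.mem_filter.mpr ⟨hFbfaces, hFsub⟩, hFbim⟩
end

section
/- Let φ : K → L be a strong covering of finite weighted simplicial complexes such that w_K(F̄)/w_K(F) = w_L(φ(F̄))/w_L(φ(F)) whenever F is a facet of F̄. Then φ ∘ L^{up}_n(L) = L^{up}_n(K) ∘ φ as maps C^n(L) → C^n(K); consequently every eigenvalue of L^{up}_n(L, w_L) is an eigenvalue of L^{up}_n(K, w_K) (with eigenvectors given by φ-pullbacks). -/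
lemma card_filter_get {α : Type*} (l : List α) (p : α → Prop) [DecidablePred p] :
    (Finset.univ.filter (fun j : Fin l.length => p (l.get j))).card
      = l.countP (fun y => decide (p y)) := by
  induction l with
  | nil => simp
  | cons x l ih =>
    rw [List.countP_cons, ← ih, Finset.card_filter, Finset.card_filter]
    simp only [List.length_cons]
    rw [Fin.sum_univ_succ]
    simp [add_comm]
    congr

lemma card_filter_val_lt (n i : ℕ) (h : i ≤ n) :
    (Finset.univ.filter (fun j : Fin n => (j : ℕ) < i)).card = i := by
  have := Finset.card_bij' (s := Finset.univ.filter (fun j : Fin n => (j : ℕ) < i))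
    (t := Finset.range i) (fun j _ => (j:ℕ)) (fun k hk => ⟨k, by simp at hk; omega⟩)
    (by intro a ha; simp at ha ⊢; omega) (by intro a ha; simp at ha ⊢; omega)
    (by intro a ha; rfl) (by intro a ha; rfl)
  rw [this, Finset.card_range]

def invc {b : ℕ} (l : List (Fin b)) : ℕ :=
  (Finset.univ.filter (fun p : Fin l.length × Fin l.length =>
    p.1 < p.2 ∧ l.get p.2 < l.get p.1)).card

lemma invc_eraseIdx {b : ℕ} (l : List (Fin b)) (hl : l.Nodup) (i : ℕ) (hi : i < l.length) :
    invc l + 2 * (Finset.univ.filter (fun j : Fin l.length =>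
        (j : ℕ) < i ∧ l.get j < l.get ⟨i, hi⟩)).card
      = invc (l.eraseIdx i) + i + l.countP (fun y => decide (y < l.get ⟨i, hi⟩)) := by
  set n := l.length with hn
  set x := l.get ⟨i, hi⟩ with hx
  set ii : Fin n := ⟨i, hi⟩ with hii
  set l' := l.eraseIdx i with hl'
  have hlen' : l'.length + 1 = n := by
    rw [hl', List.length_eraseIdx, if_pos hi]; omega
  set emb : Fin l'.length → Fin n := fun j =>
    ⟨if (j : ℕ) < i then (j : ℕ) else (j : ℕ) + 1, by have := j.isLt; split <;> omega⟩ with hemb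
  have hget' : ∀ j : Fin l'.length, l'.get j = l.get (emb j) := by
    intro j
    have hjl : (j : ℕ) < (l.eraseIdx i).length := j.isLt
    have h1 : l'.get j = (l.eraseIdx i)[(j : ℕ)]'hjl := rfl
    rw [h1, List.getElem_eraseIdx]
    by_cases h : (j : ℕ) < i
    · rw [dif_pos h]
      have he : emb j = ⟨(j : ℕ), by omega⟩ := Fin.ext (by simp [hemb, h])
      rw [he]
      rfl
    · rw [dif_neg h]
      have he : emb j = ⟨(j : ℕ) + 1, by omega⟩ := Fin.ext (by simp [hemb, h])
      rw [he]
      rfl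
  have hinj : ∀ j k : Fin n, l.get j = l.get k → j = k := by
    intro j k h
    exact (List.Nodup.get_inj_iff hl).mp h
  -- the three pieces
  set S := Finset.univ.filter (fun p : Fin n × Fin n =>
    p.1 < p.2 ∧ l.get p.2 < l.get p.1) with hS
  set A := Finset.univ.filter (fun j : Fin n => (j : ℕ) < i ∧ x < l.get j) with hA
  set B := Finset.univ.filter (fun j : Fin n => i < (j : ℕ) ∧ l.get j < x) with hB
  set C := Finset.univ.filter (fun j : Fin n => (j : ℕ) < i ∧ l.get j < x) with hC
  have split1 : S.card = (S.filter (fun p => p.2 = ii)).card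
      + (S.filter (fun p => ¬ p.2 = ii)).card :=
    (Finset.card_filter_add_card_filter_not _).symm
  have split2 : (S.filter (fun p => ¬ p.2 = ii)).card
      = ((S.filter (fun p => ¬ p.2 = ii)).filter (fun p => p.1 = ii)).card
      + ((S.filter (fun p => ¬ p.2 = ii)).filter (fun p => ¬ p.1 = ii)).card :=
    (Finset.card_filter_add_card_filter_not _).symm
  have cardA : (S.filter (fun p => p.2 = ii)).card = A.card := by
    refine Finset.card_bij' (fun p _ => p.1) (fun j _ => (j, ii)) ?_ ?_ ?_ ?_
    · intro p hp
      simp only [hS, hA, Finset.mem_filter, Finset.mem_univ, true_and] at hp ⊢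
      obtain ⟨⟨h1, h2⟩, h3⟩ := hp
      rw [h3] at h1 h2
      exact ⟨h1, h2⟩
    · intro j hj
      simp only [hS, hA, Finset.mem_filter, Finset.mem_univ, true_and] at hj ⊢
      obtain ⟨h1, h2⟩ := hj
      exact ⟨⟨h1, h2⟩, trivial⟩
    · intro p hp
      simp only [hS, Finset.mem_filter] at hp
      exact Prod.ext rfl hp.2.symm
    · intro j hj; rfl
  have cardB : ((S.filter (fun p => ¬ p.2 = ii)).filter (fun p => p.1 = ii)).card = B.card := by
    refine Finset.card_bij' (fun p _ => p.2) (fun j _ => (ii, j)) ?_ ?_ ?_ ?_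
    · intro p hp
      simp only [hS, hB, Finset.mem_filter, Finset.mem_univ, true_and] at hp ⊢
      obtain ⟨⟨⟨h1, h2⟩, h3⟩, h4⟩ := hp
      rw [h4] at h1 h2
      exact ⟨h1, h2⟩
    · intro j hj
      simp only [hS, hB, Finset.mem_filter, Finset.mem_univ, true_and] at hj ⊢
      obtain ⟨h1, h2⟩ := hj
      refine ⟨⟨⟨h1, h2⟩, ?_⟩, trivial⟩
      intro h; rw [h] at h1; exact lt_irrefl _ h1
    · intro p hp
      simp only [hS, Finset.mem_filter] at hp
      exact Prod.ext hp.2.symm rfl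
    · intro j hj; rfl
  have cardT : ((S.filter (fun p => ¬ p.2 = ii)).filter (fun p => ¬ p.1 = ii)).card
      = invc l' := by
    rw [invc]
    refine (Finset.card_bij (fun q _ => (emb q.1, emb q.2)) ?_ ?_ ?_).symm
    · intro q hq
      simp only [hS, Finset.mem_filter, Finset.mem_univ, true_and] at hq ⊢
      obtain ⟨h1, h2⟩ := hq
      rw [hget', hget'] at h2
      have e1 : (emb q.1 : ℕ) = if (q.1 : ℕ) < i then (q.1 : ℕ) else (q.1 : ℕ) + 1 := rfl
      have e2 : (emb q.2 : ℕ) = if (q.2 : ℕ) < i then (q.2 : ℕ) else (q.2 : ℕ) + 1 := rfl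
      have hq12 : (q.1 : ℕ) < (q.2 : ℕ) := h1
      refine ⟨⟨⟨?_, h2⟩, ?_⟩, ?_⟩
      · rw [Fin.lt_def, e1, e2]; split_ifs <;> omega
      · intro h
        have : (emb q.2 : ℕ) = i := by rw [h]
        rw [e2] at this; split_ifs at this <;> omega
      · intro h
        have : (emb q.1 : ℕ) = i := by rw [h]
        rw [e1] at this; split_ifs at this <;> omega
    · intro q1 h1 q2 h2 heq
      rw [Prod.mk.injEq] at heq
      have f : ∀ u v : Fin l'.length, emb u = emb v → u = v := by
        intro u v huv
        have : (emb u : ℕ) = (emb v : ℕ) := by rw [huv]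
        simp only [hemb] at this
        split_ifs at this <;> (apply Fin.ext; omega)
      exact Prod.ext (f _ _ heq.1) (f _ _ heq.2)
    · intro p hp
      simp only [hS, Finset.mem_filter, Finset.mem_univ, true_and] at hp
      obtain ⟨⟨⟨h1, h2⟩, h3⟩, h4⟩ := hp
      have hp1 : (p.1 : ℕ) ≠ i := fun h => h4 (Fin.ext h)
      have hp2 : (p.2 : ℕ) ≠ i := fun h => h3 (Fin.ext h)
      have hp1n : (p.1 : ℕ) < n := p.1.isLt
      have hp2n : (p.2 : ℕ) < n := p.2.isLt
      set r : Fin n → Fin l'.length := fun v =>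
        ⟨if (v : ℕ) < i then (v : ℕ) else (v : ℕ) - 1, by
          have := v.isLt; split <;> omega⟩ with hr
      have hembr : ∀ v : Fin n, (v : ℕ) ≠ i → emb (r v) = v := by
        intro v hv
        apply Fin.ext
        simp only [hemb, hr]
        split_ifs <;> omega
      refine ⟨(r p.1, r p.2), ?_, ?_⟩
      · simp only [Finset.mem_filter, Finset.mem_univ, true_and]
        constructor
        · rw [Fin.lt_def]
          simp only [hr]
          have : (p.1 : ℕ) < (p.2 : ℕ) := h1
          split_ifs <;> omega
        · rw [hget', hget', hembr _ hp1, hembr _ hp2]; exact h2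
      · rw [Prod.mk.injEq]
        exact ⟨hembr _ hp1, hembr _ hp2⟩
  have key1 : invc l = invc l' + A.card + B.card := by
    rw [invc, ← hS, split1, split2, cardA, cardB, cardT]; ring
  have key2 : A.card + C.card = i := by
    rw [← card_filter_val_lt n i (le_of_lt hi)]
    rw [← Finset.card_union_of_disjoint]
    · congr 1
      ext j
      simp only [hA, hC, Finset.mem_union, Finset.mem_filter, Finset.mem_univ, true_and]
      constructor
      · rintro (⟨h1, _⟩ | ⟨h1, _⟩) <;> exact h1
      · intro h1
        have hne : l.get j ≠ x := by
          intro he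
          have := hinj _ _ he
          rw [this] at h1
          exact lt_irrefl _ h1
        rcases lt_or_gt_of_ne hne with h | h
        · right; exact ⟨h1, h⟩
        · left; exact ⟨h1, h⟩
    · rw [Finset.disjoint_left]
      intro j hj1 hj2
      simp only [hA, Finset.mem_filter, Finset.mem_univ, true_and] at hj1
      simp only [hC, Finset.mem_filter, Finset.mem_univ, true_and] at hj2
      exact lt_asymm hj1.2 hj2.2
  have key3 : C.card + B.card = l.countP (fun y => decide (y < x)) := by
    rw [← card_filter_get l (fun y => y < x)]
    rw [← Finset.card_union_of_disjoint]
    · congr 1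
      ext j
      simp only [hB, hC, Finset.mem_union, Finset.mem_filter, Finset.mem_univ, true_and]
      constructor
      · rintro (⟨_, h2⟩ | ⟨_, h2⟩) <;> exact h2
      · intro h2
        have hne : (j : ℕ) ≠ i := by
          intro he
          have : j = ii := Fin.ext he
          rw [this] at h2
          exact lt_irrefl _ h2
        rcases lt_or_gt_of_ne hne with h | h
        · left; exact ⟨h, h2⟩
        · right; exact ⟨h, h2⟩
    · rw [Finset.disjoint_left]
      intro j hj1 hj2
      simp only [hC, Finset.mem_filter, Finset.mem_univ, true_and] at hj1
      simp only [hB, Finset.mem_filter, Finset.mem_univ, true_and] at hj2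
      omega
  omega

lemma map_eraseIdx' {α β : Type*} (f : α → β) :
    ∀ (l : List α) (i : ℕ), (l.eraseIdx i).map f = (l.map f).eraseIdx i
  | [], _ => by simp
  | _ :: _, 0 => by simp [List.eraseIdx]
  | x :: l, (i+1) => by
      simp only [List.eraseIdx, List.map_cons]
      rw [map_eraseIdx' f l i]

lemma neg_one_pow_congr' (m k : ℕ) (h : m % 2 = k % 2) : (-1 : ℝ) ^ m = (-1) ^ k := by
  rw [neg_one_pow_eq_pow_mod_two, h, ← neg_one_pow_eq_pow_mod_two]

lemma mapSign_eq {a b : ℕ} (φ : Fin a → Fin b) (F : Finset (Fin a))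
    (h : ((F.sort (· ≤ ·)).map φ).Nodup) :
    mapSign φ F = (-1 : ℝ) ^ invc ((F.sort (· ≤ ·)).map φ) := by
  rw [mapSign, invc]
  simp only [h, if_true]

lemma indexOf_sort_eq_countP {m : ℕ} (s : Finset (Fin m)) (v : Fin m) (hv : v ∈ s) :
    List.idxOf v (s.sort (· ≤ ·))
      = (s.sort (· ≤ ·)).countP (fun y => decide (y < v)) := by
  set l := s.sort (· ≤ ·) with hldef
  have hsort : l.SortedLT := Finset.sortedLT_sort s
  have hvl : v ∈ l := (Finset.mem_sort _).mpr hv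
  have hk : List.idxOf v l < l.length := List.idxOf_lt_length_iff.mpr hvl
  have hget : l.get ⟨_, hk⟩ = v := List.idxOf_get hk
  rw [← card_filter_get l (fun y => y < v)]
  have hiff : ∀ j : Fin l.length, l.get j < v ↔ (j : ℕ) < List.idxOf v l := by
    intro j
    constructor
    · intro h
      by_contra hc
      push_neg at hc
      rcases eq_or_lt_of_le hc with he | hlt
      · have : (⟨_, hk⟩ : Fin l.length) = j := Fin.ext he
        rw [← hget, this] at h
        exact lt_irrefl _ h
      · have := hsort.strictMono_get (Fin.lt_def.mpr (show ((⟨_, hk⟩ : Fin l.length) : ℕ) < (j : ℕ) from hlt))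
        rw [hget] at this
        exact absurd h (asymm this)
    · intro h
      have := hsort.strictMono_get (Fin.lt_def.mpr (show (j : ℕ) < ((⟨_, hk⟩ : Fin l.length) : ℕ) from h))
      rwa [hget] at this
  rw [Finset.filter_congr (fun j _ => by rw [hiff j] : ∀ j ∈ Finset.univ,
        (l.get j < v) ↔ ((j : ℕ) < List.idxOf v l))]
  exact (card_filter_val_lt l.length _ (le_of_lt hk)).symm

lemma incSign_eq_countP {m : ℕ} (s : Finset (Fin m)) (v : Fin m) (hv : v ∈ s) :
    incSign s v = (-1 : ℝ) ^ ((s.sort (· ≤ ·)).countP (fun y => decide (y < v))) := by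
  rw [incSign, indexOf_sort_eq_countP s v hv]

lemma sign_key {a b : ℕ} (φ : Fin a → Fin b) (Fb : Finset (Fin a)) (u : Fin a) (hu : u ∈ Fb)
    (hinj : ∀ x ∈ Fb, ∀ y ∈ Fb, φ x = φ y → x = y) :
    incSign Fb u * mapSign φ (Fb.erase u) = mapSign φ Fb * incSign (Fb.image φ) (φ u)
    ∧ incSign Fb u * mapSign φ Fb = mapSign φ (Fb.erase u) * incSign (Fb.image φ) (φ u) := by
  set l := Fb.sort (· ≤ ·) with hldef
  have hlnd : l.Nodup := Finset.sort_nodup _ _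
  have hmem : ∀ x, x ∈ l ↔ x ∈ Fb := fun x => Finset.mem_sort _
  set lm := l.map φ with hlm
  have hlmnd : lm.Nodup :=
    List.Nodup.map_on (fun x hx y hy => hinj x ((hmem x).mp hx) y ((hmem y).mp hy)) hlnd
  set i := List.idxOf u l with hi
  have hil : i < l.length := List.idxOf_lt_length_iff.mpr ((hmem u).mpr hu)
  have hgetu : l.get ⟨i, hil⟩ = u := List.idxOf_get hil
  have himl : i < lm.length := by rw [hlm, List.length_map]; exact hil
  have hgetlm : lm.get ⟨i, himl⟩ = φ u := by
    have h1 : lm.get ⟨i, himl⟩ = φ (l.get ⟨i, hil⟩) := List.getElem_map φ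
    rw [h1, hgetu]
  -- sorted list of the erased simplex
  have hsorterase : (Fb.erase u).sort (· ≤ ·) = l.eraseIdx i := by
    refine List.Perm.eq_of_pairwise' (Finset.pairwise_sort _ _)
      (List.Pairwise.sublist (List.eraseIdx_sublist l i) (Finset.pairwise_sort _ _)) ?_
    apply List.perm_of_nodup_nodup_toFinset_eq (Finset.sort_nodup _ _)
      (List.Nodup.sublist (List.eraseIdx_sublist l i) hlnd)
    ext y
    rw [hi, ← List.erase_eq_eraseIdx_of_idxOf rfl]
    simp only [List.mem_toFinset, Finset.mem_sort, Finset.mem_erase,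
      List.Nodup.mem_erase_iff hlnd, hmem]
  have himg : ((Fb.erase u).sort (· ≤ ·)).map φ = lm.eraseIdx i := by
    rw [hsorterase, map_eraseIdx' φ l i]
  have hndE : (lm.eraseIdx i).Nodup := List.Nodup.sublist (List.eraseIdx_sublist lm i) hlmnd
  have hms1 : mapSign φ Fb = (-1 : ℝ) ^ invc lm := mapSign_eq φ Fb hlmnd
  have hms2 : mapSign φ (Fb.erase u) = (-1 : ℝ) ^ invc (lm.eraseIdx i) := by
    rw [mapSign_eq φ (Fb.erase u) (by rw [himg]; exact hndE), himg]
  have hinc1 : incSign Fb u = (-1 : ℝ) ^ i := rfl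
  -- rank of φ u in the image
  have hpermIm : lm.Perm ((Fb.image φ).sort (· ≤ ·)) := by
    apply List.perm_of_nodup_nodup_toFinset_eq hlmnd (Finset.sort_nodup _ _)
    ext y
    simp only [List.mem_toFinset, Finset.mem_sort, hlm, List.mem_map, Finset.mem_image]
    constructor
    · rintro ⟨x, hx, rfl⟩; exact ⟨x, (hmem x).mp hx, rfl⟩
    · rintro ⟨x, hx, rfl⟩; exact ⟨x, (hmem x).mpr hx, rfl⟩
  have hphiu : φ u ∈ Fb.image φ := Finset.mem_image_of_mem φ hu
  have hinc2 : incSign (Fb.image φ) (φ u)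
      = (-1 : ℝ) ^ (lm.countP (fun y => decide (y < φ u))) := by
    rw [incSign_eq_countP _ _ hphiu, List.Perm.countP_eq _ hpermIm]
  have hkey := invc_eraseIdx lm hlmnd i himl
  rw [hgetlm] at hkey
  set R := lm.countP (fun y => decide (y < φ u)) with hR
  set E := invc (lm.eraseIdx i) with hE
  set C := (Finset.univ.filter (fun j : Fin lm.length =>
      (j : ℕ) < i ∧ lm.get j < φ u)).card with hC
  rw [hms1, hms2, hinc1, hinc2]
  constructor
  · rw [← pow_add, ← pow_add]
    exact neg_one_pow_congr' _ _ (by omega)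
  · rw [← pow_add, ← pow_add]
    exact neg_one_pow_congr' _ _ (by omega)

section CoveringLemmas

variable {a b : ℕ} (φ : Fin a → Fin b) {K : Finset (Finset (Fin a))} {L : Finset (Finset (Fin b))}

lemma nodup_map_sort {s : Finset (Fin a)} (hinj : ∀ x ∈ s, ∀ y ∈ s, φ x = φ y → x = y) :
    ((s.sort (· ≤ ·)).map φ).Nodup :=
  List.Nodup.map_on (fun x hx y hy =>
    hinj x ((Finset.mem_sort _).mp hx) y ((Finset.mem_sort _).mp hy)) (Finset.sort_nodup _ _)

lemma mapSign_ne_zero {s : Finset (Fin a)}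
    (hinj : ∀ x ∈ s, ∀ y ∈ s, φ x = φ y → x = y) : mapSign φ s ≠ 0 := by
  rw [mapSign_eq φ s (nodup_map_sort φ hinj)]
  exact pow_ne_zero _ (by norm_num)

lemma cov_card (hcov : IsCovering φ K L) {s : Finset (Fin a)} (hs : s ∈ K) :
    (s.image φ).card = s.card :=
  ((hcov.2 (s.image φ) (hcov.1 s hs)).2.1 s hs rfl).symm

lemma cov_inj (hcov : IsCovering φ K L) {s : Finset (Fin a)} (hs : s ∈ K) :
    ∀ x ∈ s, ∀ y ∈ s, φ x = φ y → x = y := by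
  have h := Finset.card_image_iff.mp (cov_card φ hcov hs)
  intro x hx y hy hxy
  exact h (Finset.mem_coe.mpr hx) (Finset.mem_coe.mpr hy) hxy

lemma image_erase_of_inj {s : Finset (Fin a)}
    (hinj : ∀ x ∈ s, ∀ y ∈ s, φ x = φ y → x = y) {u : Fin a} (hu : u ∈ s) :
    (s.erase u).image φ = (s.image φ).erase (φ u) := by
  ext y
  simp only [Finset.mem_image, Finset.mem_erase]
  constructor
  · rintro ⟨x, ⟨hxu, hxs⟩, rfl⟩
    exact ⟨fun h => hxu (hinj x hxs u hu h), x, hxs, rfl⟩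
  · rintro ⟨hy, x, hxs, rfl⟩
    exact ⟨x, ⟨fun h => hy (by rw [h]), hxs⟩, rfl⟩

lemma cofacet_struct {F Fb : Finset (Fin a)} (hsub : F ⊆ Fb) (hcard : F.card + 1 = Fb.card) :
    ∃ u, u ∈ Fb ∧ F = Fb.erase u ∧ Fb \ F = {u} := by
  have h1 : (Fb \ F).card = 1 := by
    rw [Finset.card_sdiff_of_subset hsub]; omega
  obtain ⟨u, hu⟩ := Finset.card_eq_one.mp h1
  have huF : u ∈ Fb \ F := hu ▸ Finset.mem_singleton_self u
  have huFb := (Finset.mem_sdiff.mp huF).1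
  have hunF := (Finset.mem_sdiff.mp huF).2
  have hsub2 : F ⊆ Fb.erase u := fun x hx =>
    Finset.mem_erase.mpr ⟨fun h => hunF (h ▸ hx), hsub hx⟩
  have hcale : (Fb.erase u).card ≤ F.card := by
    rw [Finset.card_erase_of_mem huFb]; omega
  exact ⟨u, huFb, Finset.eq_of_subset_of_card_le hsub2 hcale, hu⟩

lemma coboundary_pullback (g : Finset (Fin b) → ℝ) {Fb : Finset (Fin a)}
    (hinj : ∀ x ∈ Fb, ∀ y ∈ Fb, φ x = φ y → x = y) :
    coboundary (pullback φ g) Fb = mapSign φ Fb * coboundary g (Fb.image φ) := by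
  rw [coboundary, coboundary, Finset.sum_image hinj, Finset.mul_sum]
  apply Finset.sum_congr rfl
  intro u hu
  rw [pullback, image_erase_of_inj φ hinj hu, ← mul_assoc, (sign_key φ Fb u hu hinj).1,
    mul_assoc]

end CoveringLemmas

/-- **Theorem 3.11.** Let `φ : K → L` be a strong covering with weights satisfying
`w_K(F̄)/w_K(F) = w_L(φ(F̄))/w_L(φ(F))` whenever `F` is a facet of `F̄`. Then
`φ ∘ L^{up}_n(L) = L^{up}_n(K) ∘ φ` on cochains; consequently every eigenvalue of
`L^{up}_n(L,w_L)` is an eigenvalue of `L^{up}_n(K,w_K)`, with eigenvectors given by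
`φ`-pullbacks (which are nonzero for nonzero eigenfunctions). -/
theorem stmt_16 {a b n : ℕ} (K : Finset (Finset (Fin a))) (L : Finset (Finset (Fin b)))
    (hK : IsComplex K) (hL : IsComplex L)
    (φ : Fin a → Fin b) (hcov : IsCovering φ K L)
    (hstrong : ∀ d : ℕ, StrongAt φ K L d)
    (wK : Finset (Fin a) → ℝ) (wL : Finset (Fin b) → ℝ)
    (hposK : ∀ s ∈ K, 0 < wK s) (hposL : ∀ s ∈ L, 0 < wL s)
    (hratio : ∀ Fb ∈ K, ∀ F ∈ K, F ⊆ Fb → F.card + 1 = Fb.card →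
        wK Fb / wK F = wL (Fb.image φ) / wL (F.image φ)) :
    (∀ g : Finset (Fin b) → ℝ, ∀ F ∈ faces K n,
        pullback φ (fun G => upLap L wL n g G) F = upLap K wK n (pullback φ g) F) ∧
    (∀ μ : ℝ, ∀ g : Finset (Fin b) → ℝ, g ≠ 0 →
        (∀ G, G ∉ faces L n → g G = 0) →
        (∀ G ∈ faces L n, upLap L wL n g G = μ * g G) →
        pullback φ g ≠ 0 ∧
          ∀ F ∈ faces K n, upLap K wK n (pullback φ g) F = μ * pullback φ g F) := by
  have hpart1 : ∀ g : Finset (Fin b) → ℝ, ∀ F ∈ faces K n,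
      pullback φ (fun G => upLap L wL n g G) F = upLap K wK n (pullback φ g) F := by
    intro g F hF
    have hF' := hF
    simp only [faces, Finset.mem_filter] at hF'
    obtain ⟨hFK, hFcard⟩ := hF'
    have hGL : F.image φ ∈ L := hcov.1 F hFK
    have hGcard : (F.image φ).card = n + 1 := by rw [cov_card φ hcov hFK, hFcard]
    have hGf : F.image φ ∈ faces L n := by
      simp only [faces, Finset.mem_filter]; exact ⟨hGL, hGcard⟩
    have hwF : wK F ≠ 0 := ne_of_gt (hposK F hFK)
    have hwG : wL (F.image φ) ≠ 0 := ne_of_gt (hposL _ hGL)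
    rw [pullback, upLap, upLap, if_neg hwG, if_neg hwF]
    have hsum : ∑ Fb ∈ (faces K (n+1)).filter (fun s => F ⊆ s),
        (wK F)⁻¹ * (wK Fb * (∑ v ∈ Fb \ F, incSign Fb v) * coboundary (pullback φ g) Fb)
        = ∑ Gb ∈ (faces L (n+1)).filter (fun s => F.image φ ⊆ s),
          mapSign φ F * ((wL (F.image φ))⁻¹ *
            (wL Gb * (∑ v ∈ Gb \ F.image φ, incSign Gb v) * coboundary g Gb)) := by
      refine Finset.sum_bij (fun Fb _ => Fb.image φ) ?_ ?_ ?_ ?_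
      · intro Fb hFb
        simp only [faces, Finset.mem_filter] at hFb ⊢
        obtain ⟨⟨hFbK, hFbcard⟩, hFsub⟩ := hFb
        exact ⟨⟨hcov.1 Fb hFbK, by rw [cov_card φ hcov hFbK]; exact hFbcard⟩,
          Finset.image_subset_image hFsub⟩
      · intro Fb1 h1 Fb2 h2 heq
        by_contra hne
        simp only [faces, Finset.mem_filter] at h1 h2
        have hdis := (hcov.2 (Fb1.image φ) (hcov.1 Fb1 h1.1.1)).2.2 Fb1 h1.1.1 Fb2 h2.1.1
          rfl heq.symm hne
        have hFne : F.Nonempty := Finset.card_pos.mp (by omega)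
        obtain ⟨x, hx⟩ := hFne
        exact Finset.disjoint_left.mp hdis (h1.2 hx) (h2.2 hx)
      · intro Gb hGb
        have hGb' := hGb
        simp only [faces, Finset.mem_filter] at hGb'
        obtain ⟨⟨hGbL, hGbcard⟩, hGsub⟩ := hGb'
        obtain ⟨Fb, hFb, hFsub, hFbim⟩ := hstrong n Gb
          (by simp only [faces, Finset.mem_filter]; exact ⟨hGbL, hGbcard⟩)
          (F.image φ) hGf hGsub F hF rfl
        have hFbf := hFb
        simp only [faces, Finset.mem_filter] at hFbf
        exact ⟨Fb, Finset.mem_filter.mpr ⟨hFb, hFsub⟩, hFbim⟩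
      · intro Fb hFb
        have hFb' := hFb
        simp only [faces, Finset.mem_filter] at hFb'
        obtain ⟨⟨hFbK, hFbcard⟩, hFsub⟩ := hFb'
        have hinjFb := cov_inj φ hcov hFbK
        obtain ⟨u, huFb, hFerase, hsdiff⟩ := cofacet_struct hFsub (by omega)
        have himerase : F.image φ = (Fb.image φ).erase (φ u) := by
          rw [hFerase, image_erase_of_inj φ hinjFb huFb]
        have hGbsd : Fb.image φ \ F.image φ = {φ u} := by
          rw [himerase, Finset.sdiff_erase (Finset.mem_image_of_mem φ huFb),
            Finset.sdiff_self]
          rfl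
        have hwEq : (wK F)⁻¹ * wK Fb = (wL (F.image φ))⁻¹ * wL (Fb.image φ) := by
          have hr := hratio Fb hFbK F hFK hFsub (by omega)
          rw [inv_mul_eq_div, inv_mul_eq_div]
          exact hr
        have hsum1 : (∑ v ∈ Fb \ F, incSign Fb v) = incSign Fb u := by
          rw [hsdiff, Finset.sum_singleton]
        have hsum2 : (∑ v ∈ Fb.image φ \ F.image φ, incSign (Fb.image φ) v)
            = incSign (Fb.image φ) (φ u) := by
          rw [hGbsd, Finset.sum_singleton]
        rw [hsum1, hsum2, coboundary_pullback φ g hinjFb]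
        have hsk := (sign_key φ Fb u huFb hinjFb).2
        rw [← hFerase] at hsk
        calc (wK F)⁻¹ * (wK Fb * incSign Fb u * (mapSign φ Fb * coboundary g (Fb.image φ)))
            = ((wK F)⁻¹ * wK Fb) * (incSign Fb u * mapSign φ Fb)
              * coboundary g (Fb.image φ) := by ring
          _ = ((wL (F.image φ))⁻¹ * wL (Fb.image φ))
              * (mapSign φ F * incSign (Fb.image φ) (φ u))
              * coboundary g (Fb.image φ) := by rw [hwEq, hsk]
          _ = mapSign φ F * ((wL (F.image φ))⁻¹ * (wL (Fb.image φ)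
              * incSign (Fb.image φ) (φ u) * coboundary g (Fb.image φ))) := by ring
    rw [Finset.mul_sum, Finset.mul_sum, ← hsum, ← Finset.mul_sum]
  refine ⟨hpart1, ?_⟩
  intro μ g hg0 hsupp heig
  constructor
  · obtain ⟨G₀, hG₀⟩ : ∃ G₀, g G₀ ≠ 0 := by
      by_contra h
      push_neg at h
      exact hg0 (funext h)
    have hG₀f : G₀ ∈ faces L n := by
      by_contra h
      exact hG₀ (hsupp G₀ h)
    have hG₀f' := hG₀f
    simp only [faces, Finset.mem_filter] at hG₀f'
    obtain ⟨hG₀L, hG₀card⟩ := hG₀f'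
    obtain ⟨F₀, hF₀K, hF₀im⟩ := (hcov.2 G₀ hG₀L).1
    intro hpz
    have h1 : pullback φ g F₀ = 0 := by rw [hpz]; rfl
    rw [pullback, hF₀im] at h1
    rcases mul_eq_zero.mp h1 with h | h
    · exact mapSign_ne_zero φ (cov_inj φ hcov hF₀K) h
    · exact hG₀ h
  · intro F hF
    have hF' := hF
    simp only [faces, Finset.mem_filter] at hF'
    obtain ⟨hFK, hFcard⟩ := hF'
    have hGf : F.image φ ∈ faces L n := by
      simp only [faces, Finset.mem_filter]
      exact ⟨hcov.1 F hFK, by rw [cov_card φ hcov hFK, hFcard]⟩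
    rw [← hpart1 g F hF, pullback, pullback, heig _ hGf]
    ring
end
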